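/- Let G be a median graph with n vertices, q Θ-classes, and dimension d. Then q ≥ d(n^{1/d} - 1). -/

import Mathlib

def interval {V : Type*} (G : SimpleGraph V) (u v : V) : Set V :=
  {x | G.dist u x + G.dist x v = G.dist u v}

def IsMedianGraph {V : Type*} (G : SimpleGraph V) : Prop :=
  G.Connected ∧ ∀ x y z : V,
    ∃! m : V, m ∈ interval G x y ∧ m ∈ interval G y z ∧ m ∈ interval G z x

def cubeGraph (k : ℕ) : SimpleGraph (Fin k → Bool) :=
  SimpleGraph.fromRel (fun x y => ∃ i, x i ≠ y i ∧ ∀ j, j ≠ i → x j = y j)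

/-- Edges `e` and `f` are opposite edges of a common 4-cycle (`Θ₀` relation). -/
def oppEdges {V : Type*} (G : SimpleGraph V) (e f : Sym2 V) : Prop :=
  ∃ a b c d : V, G.Adj a b ∧ G.Adj b c ∧ G.Adj c d ∧ G.Adj d a ∧
    a ≠ c ∧ b ≠ d ∧ e = s(a, b) ∧ f = s(d, c)

/-- The `Θ`-classes: equivalence classes of the reflexive-transitive closure of `Θ₀`. -/
def thetaClasses {V : Type*} (G : SimpleGraph V) : Set (Set (Sym2 V)) :=
  {C | ∃ e ∈ G.edgeSet,
    C = {f | f ∈ G.edgeSet ∧ Relation.ReflTransGen (oppEdges G) e f}}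

namespace ThetaProof

open SimpleGraph

variable {V : Type*} {G : SimpleGraph V}

lemma conn (hG : IsMedianGraph G) : G.Connected := hG.1

lemma dcomm (G : SimpleGraph V) (u v : V) : G.dist u v = G.dist v u :=
  SimpleGraph.dist_comm

lemma med_unique (hG : IsMedianGraph G) {x y z m m' : V}
    (h1 : m ∈ interval G x y ∧ m ∈ interval G y z ∧ m ∈ interval G z x)
    (h2 : m' ∈ interval G x y ∧ m' ∈ interval G y z ∧ m' ∈ interval G z x) : m = m' := by
  obtain ⟨mm, _, hu⟩ := hG.2 x y z
  rw [hu m h1, hu m' h2]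

lemma mem_interval {u v x : V} :
    x ∈ interval G u v ↔ G.dist u x + G.dist x v = G.dist u v := Iff.rfl

lemma dist_adj (hG : IsMedianGraph G) {a b : V} (hab : G.Adj a b) : G.dist a b = 1 :=
  dist_eq_one_iff_adj.2 hab

lemma dist_zero (hG : IsMedianGraph G) {a b : V} (h : G.dist a b = 0) : a = b :=
  ((conn hG).dist_eq_zero_iff).1 h

/-- Bipartiteness dichotomy: adjacent vertices have distances to any `x` differing by one. -/
lemma adj_cases (hG : IsMedianGraph G) {a b : V} (hab : G.Adj a b) (x : V) :
    G.dist x a + 1 = G.dist x b ∨ G.dist x b + 1 = G.dist x a := by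
  have h1 : G.dist a b = 1 := dist_adj hG hab
  have hba : G.dist b a = 1 := by rw [dist_comm]; exact h1
  have t1 : G.dist x b ≤ G.dist x a + 1 := by
    have := (conn hG).dist_triangle (u := x) (v := a) (w := b); omega
  have t2 : G.dist x a ≤ G.dist x b + 1 := by
    have := (conn hG).dist_triangle (u := x) (v := b) (w := a); omega
  have hne : G.dist x a ≠ G.dist x b := by
    intro heq
    obtain ⟨m, ⟨hxa, hab', hbx⟩, _⟩ := hG.2 x a b
    rw [mem_interval] at hxa hab' hbx
    rw [h1] at hab'
    have : G.dist a m = 0 ∨ G.dist m b = 0 := by omega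
    rcases this with h0 | h0
    · have he : a = m := dist_zero hG h0
      rw [← he] at hbx
      rw [hba, dcomm G a x, dcomm G b x] at hbx
      omega
    · have he : m = b := dist_zero hG h0
      rw [he] at hxa
      rw [hba] at hxa
      omega
  omega

/-- The square lemma, one direction. -/
lemma square_dir (hG : IsMedianGraph G) {a b c d : V} (hab : G.Adj a b) (hbc : G.Adj b c)
    (hcd : G.Adj c d) (hda : G.Adj d a) (hac : a ≠ c) (hbd : b ≠ d) (x : V)
    (h : G.dist x a < G.dist x b) : G.dist x d < G.dist x c := by
  by_contra hcon
  have e1 := adj_cases hG hab x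
  have e2 := adj_cases hG hbc x
  have e3 := adj_cases hG hcd x
  have e4 := adj_cases hG hda x
  -- distances
  have hxb : G.dist x b = G.dist x a + 1 := by omega
  have hxd : G.dist x d = G.dist x c + 1 := by omega
  have hca : G.dist x c = G.dist x a := by omega
  have hnadj : ¬ G.Adj b d := by
    intro hbdadj
    have := adj_cases hG hbdadj x
    omega
  have hbd2 : G.dist b d = 2 := by
    have hle : G.dist b d ≤ 2 := by
      have t := (conn hG).dist_triangle (u := b) (v := c) (w := d)
      rw [dist_adj hG hbc, dist_adj hG hcd] at t
      omega
    have h0 : G.dist b d ≠ 0 := fun h0 => hbd (dist_zero hG h0)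
    have h1 : G.dist b d ≠ 1 := fun h1 => hnadj (dist_eq_one_iff_adj.1 h1)
    omega
  -- a and c are both medians of (x, b, d)
  have hma : a ∈ interval G x b ∧ a ∈ interval G b d ∧ a ∈ interval G d x := by
    refine ⟨?_, ?_, ?_⟩ <;> rw [mem_interval]
    · rw [dist_adj hG hab]; omega
    · rw [dcomm G b a, dist_adj hG hab, hbd2, dcomm G a d, dist_adj hG hda]
    · rw [dist_adj hG hda, dcomm G a x, dcomm G d x]
      omega
  have hmc : c ∈ interval G x b ∧ c ∈ interval G b d ∧ c ∈ interval G d x := by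
    refine ⟨?_, ?_, ?_⟩ <;> rw [mem_interval]
    · rw [dcomm G c b, dist_adj hG hbc]; omega
    · rw [dist_adj hG hbc, hbd2, dist_adj hG hcd]
    · rw [dcomm G d c, dist_adj hG hcd, dcomm G c x, dcomm G d x]
      omega
  exact hac (med_unique hG hma hmc)

/-- The square lemma. -/
lemma square_iff (hG : IsMedianGraph G) {a b c d : V} (hab : G.Adj a b) (hbc : G.Adj b c)
    (hcd : G.Adj c d) (hda : G.Adj d a) (hac : a ≠ c) (hbd : b ≠ d) (x : V) :
    (G.dist x a < G.dist x b ↔ G.dist x d < G.dist x c) := by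
  constructor
  · exact square_dir hG hab hbc hcd hda hac hbd x
  · exact square_dir hG hcd.symm hbc.symm hab.symm hda.symm hbd.symm hac.symm x

lemma exists_closer (hG : IsMedianGraph G) {u a : V} (h : 0 < G.dist u a) :
    ∃ p, G.Adj u p ∧ G.dist p a + 1 = G.dist u a := by
  obtain ⟨w, hw⟩ := (conn hG).exists_walk_length_eq_dist u a
  cases w with
  | nil => rw [SimpleGraph.dist_self] at h; omega
  | @cons _ p _ hadj w' =>
    refine ⟨p, hadj, ?_⟩
    have h1 : G.dist p a ≤ w'.length := dist_le w'
    have h2 : G.dist u a ≤ 1 + G.dist p a := by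
      have := (conn hG).dist_triangle (u := u) (v := p) (w := a)
      rw [dist_adj hG hadj] at this; omega
    simp only [Walk.length_cons] at hw
    omega

/-- The cut-edge lemma: any edge crossing the cut of `ab` is Θ-related to `ab`. -/
lemma cross_rel (hG : IsMedianGraph G) (α : ℕ) : ∀ {a b u x : V}, G.Adj a b → G.Adj u x →
    G.dist u a = α → G.dist u a < G.dist u b → G.dist x b < G.dist x a →
    Relation.ReflTransGen (oppEdges G) s(a, b) s(u, x) := by
  induction α using Nat.strong_induction_on with
  | _ α IH =>
    intro a b u x hab hux hα h1 h2
    have hub : G.dist u b = α + 1 := by have := adj_cases hG hab u; omega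
    have hxa1 : G.dist x a = G.dist x b + 1 := by have := adj_cases hG hab x; omega
    have hxu : G.dist x u = 1 := by rw [dcomm]; exact dist_adj hG hux
    have hxb : G.dist x b = α := by
      have t1 : G.dist u b ≤ G.dist u x + G.dist x b := (conn hG).dist_triangle
      have t2 : G.dist x a ≤ G.dist x u + G.dist u a := (conn hG).dist_triangle
      rw [dist_adj hG hux] at t1
      omega
    have hxa : G.dist x a = α + 1 := by omega
    rcases Nat.eq_zero_or_pos α with h0 | hpos
    · -- base case : u = a, x = b
      subst h0
      have hua : u = a := dist_zero hG (by omega)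
      have hxb' : x = b := dist_zero hG (by omega)
      subst hua; subst hxb'
      exact Relation.ReflTransGen.refl
    · obtain ⟨p, hup, hpa⟩ := exists_closer hG (by omega : 0 < G.dist u a)
      have hpb : G.dist p b = α := by
        have t1 : G.dist u b ≤ G.dist u p + G.dist p b := (conn hG).dist_triangle
        have t2 : G.dist p b ≤ G.dist p a + G.dist a b := (conn hG).dist_triangle
        rw [dist_adj hG hup] at t1
        rw [dist_adj hG hab] at t2
        omega
      have hxp : x ≠ p := by intro he; subst he; omega
      have hnadj : ¬ G.Adj x p := by
        intro hadj
        have := adj_cases hG hadj a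
        rw [dcomm G a x, dcomm G a p] at this
        omega
      have hdxp : G.dist x p = 2 := by
        have t1 : G.dist x p ≤ G.dist x u + G.dist u p := (conn hG).dist_triangle
        rw [hxu, dist_adj hG hup] at t1
        have h0' : G.dist x p ≠ 0 := fun h0 => hxp (dist_zero hG h0)
        have h1' : G.dist x p ≠ 1 := fun h1 => hnadj (dist_eq_one_iff_adj.1 h1)
        omega
      obtain ⟨m, ⟨hxpm, hpbm, hbxm⟩, _⟩ := hG.2 x p b
      rw [mem_interval] at hxpm hpbm hbxm
      rw [hdxp] at hxpm
      rw [hpb] at hpbm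
      rw [dcomm G b x] at hbxm
      have hmx : m ≠ x := by
        intro he; subst he
        rw [dcomm G p m, hdxp] at hpbm
        omega
      have hmp : m ≠ p := by
        intro he; subst he
        rw [dcomm G b m, dcomm G m x, hdxp] at hbxm
        omega
      have hxm : G.dist x m = 1 := by
        have n1 : G.dist x m ≠ 0 := fun h0 => hmx (dist_zero hG h0).symm
        have n2 : G.dist m p ≠ 0 := fun h0 => hmp (dist_zero hG h0)
        omega
      have hmp1 : G.dist m p = 1 := by omega
      have hmb : G.dist m b = α - 1 := by
        rw [dcomm G m x, hxm] at hbxm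
        rw [dcomm G m b]
        omega
      have hma : G.dist m a = α := by
        have t1 : G.dist x a ≤ G.dist x m + G.dist m a := (conn hG).dist_triangle
        have t2 : G.dist m a ≤ G.dist m p + G.dist p a := (conn hG).dist_triangle
        rw [hxm] at t1; rw [hmp1] at t2
        omega
      have hpm : G.Adj p m := dist_eq_one_iff_adj.1 (by rw [dcomm]; exact hmp1)
      have hrec : Relation.ReflTransGen (oppEdges G) s(a, b) s(p, m) := by
        refine IH (α - 1) (by omega) hab hpm (by omega) (by omega) (by omega)
      refine hrec.tail ?_
      refine ⟨p, m, x, u, hpm, ?_, hux.symm, hup, hxp.symm, ?_, rfl, rfl⟩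
      · exact dist_eq_one_iff_adj.1 (by rw [dcomm]; exact hxm)
      · intro he; subst he; omega


/-! ### Θ-classes, sides and separation -/

def eCls (G : SimpleGraph V) (e : Sym2 V) : Set (Sym2 V) :=
  {f | f ∈ G.edgeSet ∧ Relation.ReflTransGen (oppEdges G) e f}

lemma oppEdges_symm : Symmetric (oppEdges G) := by
  rintro e f ⟨a, b, c, d, h1, h2, h3, h4, h5, h6, rfl, rfl⟩
  exact ⟨d, c, b, a, h3.symm, h2.symm, h1.symm, h4.symm, h6.symm, h5.symm, rfl, rfl⟩

lemma rtg_symm {e f : Sym2 V} (h : Relation.ReflTransGen (oppEdges G) e f) :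
    Relation.ReflTransGen (oppEdges G) f e := by
  induction h with
  | refl => exact Relation.ReflTransGen.refl
  | tail _ hbc ih => exact Relation.ReflTransGen.head (oppEdges_symm hbc) ih

lemma eCls_mem_self {e : Sym2 V} (he : e ∈ G.edgeSet) : e ∈ eCls G e :=
  ⟨he, Relation.ReflTransGen.refl⟩

lemma eCls_eq_of_mem {e f : Sym2 V} (hf : f ∈ eCls G e) : eCls G f = eCls G e := by
  ext g
  constructor
  · rintro ⟨hg, hrel⟩; exact ⟨hg, hf.2.trans hrel⟩
  · rintro ⟨hg, hrel⟩; exact ⟨hg, (rtg_symm hf.2).trans hrel⟩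

lemma eCls_mem_theta {e : Sym2 V} (he : e ∈ G.edgeSet) : eCls G e ∈ thetaClasses G :=
  ⟨e, he, rfl⟩

lemma theta_rep {C : Set (Sym2 V)} (hC : C ∈ thetaClasses G) :
    ∃ a b : V, G.Adj a b ∧ s(a, b) ∈ C ∧ C = eCls G s(a, b) := by
  obtain ⟨e, he, rfl⟩ := hC
  induction e with
  | _ a b =>
    exact ⟨a, b, he, eCls_mem_self he, rfl⟩

def sSide (G : SimpleGraph V) (e : Sym2 V) (u v : V) : Prop :=
  ∀ a b : V, e = s(a, b) → (G.dist u a < G.dist u b ↔ G.dist v a < G.dist v b)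

lemma sSide_iff (hG : IsMedianGraph G) {a b : V} (hab : G.Adj a b) (u v : V) :
    sSide G s(a, b) u v ↔ (G.dist u a < G.dist u b ↔ G.dist v a < G.dist v b) := by
  constructor
  · exact fun h => h a b rfl
  · intro h a' b' he
    rcases Sym2.eq_iff.1 he with ⟨ha, hb⟩ | ⟨ha, hb⟩
    · rw [← ha, ← hb]; exact h
    · rw [← ha, ← hb]
      rcases adj_cases hG hab u with h1 | h1 <;> rcases adj_cases hG hab v with h2 | h2 <;>
        (constructor <;> intro <;> omega)

def cSide (G : SimpleGraph V) (C : Set (Sym2 V)) (u v : V) : Prop :=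
  ∃ e ∈ C, sSide G e u v

lemma sSide_opp (hG : IsMedianGraph G) {e f : Sym2 V} (h : oppEdges G e f) (u v : V) :
    sSide G e u v ↔ sSide G f u v := by
  obtain ⟨a, b, c, d, h1, h2, h3, h4, h5, h6, rfl, rfl⟩ := h
  rw [sSide_iff hG h1, sSide_iff hG h3.symm]
  have hu := square_iff hG h1 h2 h3 h4 h5 h6 u
  have hv := square_iff hG h1 h2 h3 h4 h5 h6 v
  tauto

lemma sSide_rtg (hG : IsMedianGraph G) {e f : Sym2 V}
    (h : Relation.ReflTransGen (oppEdges G) e f) (u v : V) :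
    sSide G e u v ↔ sSide G f u v := by
  induction h with
  | refl => rfl
  | tail _ hstep ih => rw [ih, sSide_opp hG hstep]

lemma cSide_iff_rep (hG : IsMedianGraph G) {C : Set (Sym2 V)} {a b : V}
    (hC : C ∈ thetaClasses G) (hmem : s(a, b) ∈ C) (u v : V) :
    cSide G C u v ↔ sSide G s(a, b) u v := by
  obtain ⟨e0, he0, rfl⟩ := hC
  constructor
  · rintro ⟨f, hfC, hsf⟩
    rw [← sSide_rtg hG hfC.2, sSide_rtg hG hmem.2] at hsf
    exact hsf
  · intro h; exact ⟨s(a, b), hmem, h⟩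

lemma cSide_refl (hG : IsMedianGraph G) {C : Set (Sym2 V)} (hC : C ∈ thetaClasses G) (u : V) :
    cSide G C u u := by
  obtain ⟨a, b, hab, hmem, _⟩ := theta_rep hC
  rw [cSide_iff_rep hG hC hmem, sSide_iff hG hab]

lemma cSide_symm (hG : IsMedianGraph G) {C : Set (Sym2 V)} (hC : C ∈ thetaClasses G) {u v : V}
    (h : cSide G C u v) : cSide G C v u := by
  obtain ⟨a, b, hab, hmem, _⟩ := theta_rep hC
  rw [cSide_iff_rep hG hC hmem, sSide_iff hG hab] at h ⊢
  exact h.symm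

lemma cSide_parity (hG : IsMedianGraph G) {C : Set (Sym2 V)} (hC : C ∈ thetaClasses G)
    (u v w : V) : cSide G C u w ↔ (cSide G C u v ↔ cSide G C v w) := by
  obtain ⟨a, b, hab, hmem, _⟩ := theta_rep hC
  rw [cSide_iff_rep hG hC hmem, cSide_iff_rep hG hC hmem, cSide_iff_rep hG hC hmem,
    sSide_iff hG hab, sSide_iff hG hab, sSide_iff hG hab]
  tauto

lemma not_sSide_ends (hG : IsMedianGraph G) {a b : V} (hab : G.Adj a b) :
    ¬ sSide G s(a, b) a b := by
  rw [sSide_iff hG hab]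
  rw [SimpleGraph.dist_self, dist_adj hG hab, dcomm G b a, dist_adj hG hab, SimpleGraph.dist_self]
  simp

lemma cSide_edge_ne (hG : IsMedianGraph G) {C : Set (Sym2 V)} (hC : C ∈ thetaClasses G)
    {u x : V} (hux : G.Adj u x) (hne : C ≠ eCls G s(u, x)) : cSide G C u x := by
  by_contra h
  obtain ⟨a, b, hab, hmem, hCe⟩ := theta_rep hC
  rw [cSide_iff_rep hG hC hmem, sSide_iff hG hab] at h
  rcases adj_cases hG hab u with h1 | h1 <;> rcases adj_cases hG hab x with h2 | h2
  · exact h (by constructor <;> intro <;> omega)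
  · -- u on a-side, x on b-side
    have hrel := cross_rel hG (G.dist u a) hab hux rfl (by omega) (by omega)
    have hmem2 : s(u, x) ∈ eCls G s(a, b) := ⟨hux, hrel⟩
    rw [hCe, ← eCls_eq_of_mem hmem2] at hne
    exact hne rfl
  · -- u on b-side, x on a-side
    have hrel := cross_rel hG (G.dist u b) hab.symm hux rfl (by omega) (by omega)
    have hmem2 : s(u, x) ∈ eCls G s(b, a) := ⟨hux, hrel⟩
    have hswap : s(b, a) = s(a, b) := Sym2.eq_swap
    rw [hswap] at hmem2
    rw [hCe, ← eCls_eq_of_mem hmem2] at hne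
    exact hne rfl
  · exact h (by constructor <;> intro <;> omega)

def sep (G : SimpleGraph V) (u v : V) : Set (Set (Sym2 V)) :=
  {C | C ∈ thetaClasses G ∧ ¬ cSide G C u v}

lemma mem_sep {C : Set (Sym2 V)} {u v : V} :
    C ∈ sep G u v ↔ C ∈ thetaClasses G ∧ ¬ cSide G C u v := Iff.rfl

lemma sep_self (hG : IsMedianGraph G) (u : V) : sep G u u = ∅ := by
  ext C
  simp only [mem_sep, Set.mem_empty_iff_false, iff_false, not_and, not_not]
  exact fun hC => cSide_refl hG hC u

lemma sep_symm (hG : IsMedianGraph G) (u v : V) : sep G u v = sep G v u := by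
  ext C
  simp only [mem_sep]
  constructor <;> (rintro ⟨hC, h⟩; exact ⟨hC, fun h2 => h (cSide_symm hG hC h2)⟩)

variable [Fintype V]

lemma sep_finite (u v : V) : (sep G u v).Finite := Set.toFinite _

lemma dist_eq_ncard_sep (hG : IsMedianGraph G) : ∀ (n : ℕ) (u v : V), G.dist u v = n →
    (sep G u v).ncard = n := by
  intro n
  induction n using Nat.strong_induction_on with
  | _ n IH =>
    intro u v hd
    rcases Nat.eq_zero_or_pos n with h0 | hpos
    · subst h0
      have : u = v := dist_zero hG hd
      subst this
      rw [sep_self hG]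
      simp
    · obtain ⟨w, huw, hwv⟩ := exists_closer hG (by omega : 0 < G.dist u v)
      have hwvd : G.dist w v = n - 1 := by omega
      have hedge : s(u, w) ∈ G.edgeSet := huw
      have hC0 : eCls G s(u, w) ∈ thetaClasses G := eCls_mem_theta hedge
      have hmem0 : s(u, w) ∈ eCls G s(u, w) := eCls_mem_self hedge
      have hsep0 : eCls G s(u, w) ∈ sep G u v := by
        refine ⟨hC0, ?_⟩
        rw [cSide_iff_rep hG hC0 hmem0, sSide_iff hG huw]
        rw [SimpleGraph.dist_self, dist_adj hG huw, dcomm G v u, dcomm G v w]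
        intro hiff
        have := hiff.1 (by omega)
        omega
      have hnsep0 : eCls G s(u, w) ∉ sep G w v := by
        simp only [mem_sep, not_and, not_not]
        intro _
        rw [cSide_iff_rep hG hC0 hmem0, sSide_iff hG huw]
        rw [dcomm G w u, dist_adj hG huw, SimpleGraph.dist_self, dcomm G v u, dcomm G v w]
        constructor <;> intro <;> omega
      have hins : sep G u v = insert (eCls G s(u, w)) (sep G w v) := by
        ext C
        simp only [Set.mem_insert_iff]
        constructor
        · rintro ⟨hC, hside⟩
          by_cases hne : C = eCls G s(u, w)
          · exact Or.inl hne
          · refine Or.inr ⟨hC, fun h2 => hside ?_⟩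
            rw [cSide_parity hG hC u w v]
            have h3 := cSide_edge_ne hG hC huw hne
            tauto
        · rintro (rfl | ⟨hC, hside⟩)
          · exact hsep0
          · have hne : C ≠ eCls G s(u, w) := by
              rintro rfl; exact hnsep0 ⟨hC, hside⟩
            refine ⟨hC, fun h2 => hside ?_⟩
            rw [cSide_parity hG hC u w v] at h2
            have h3 := cSide_edge_ne hG hC huw hne
            tauto
      rw [hins, Set.ncard_insert_of_notMem hnsep0 (sep_finite w v)]
      rw [IH (n - 1) (by omega) w v hwvd]
      omega

lemma sep_ncard (hG : IsMedianGraph G) (u v : V) : (sep G u v).ncard = G.dist u v :=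
  dist_eq_ncard_sep hG _ u v rfl

lemma sep_eq_empty_iff (hG : IsMedianGraph G) {u v : V} : sep G u v = ∅ ↔ u = v := by
  constructor
  · intro h
    have := sep_ncard hG u v
    rw [h] at this
    simp at this
    exact dist_zero hG this.symm
  · rintro rfl; exact sep_self hG u

lemma sep_triangle (hG : IsMedianGraph G) (u v w : V) :
    sep G u w ⊆ sep G u v ∪ sep G v w := by
  rintro C ⟨hC, hside⟩
  rw [cSide_parity hG hC u v w] at hside
  by_cases h1 : cSide G C u v
  · exact Or.inr ⟨hC, fun h2 => hside (by tauto)⟩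
  · exact Or.inl ⟨hC, h1⟩

lemma sep_between (hG : IsMedianGraph G) {u v m : V} (hm : m ∈ interval G u v) :
    sep G u m ⊆ sep G u v ∧ sep G m v ⊆ sep G u v ∧ sep G u m ∩ sep G m v = ∅ := by
  have hsub : sep G u v ⊆ sep G u m ∪ sep G m v := sep_triangle hG u m v
  have hcard : (sep G u m).ncard + (sep G m v).ncard = (sep G u v).ncard := by
    rw [sep_ncard hG, sep_ncard hG, sep_ncard hG]
    exact hm
  have hle : (sep G u v).ncard ≤ (sep G u m ∪ sep G m v).ncard :=
    Set.ncard_le_ncard hsub (Set.toFinite _)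
  have hle2 : (sep G u m ∪ sep G m v).ncard ≤ (sep G u m).ncard + (sep G m v).ncard :=
    Set.ncard_union_le _ _
  have hUeq : sep G u v = sep G u m ∪ sep G m v :=
    Set.eq_of_subset_of_ncard_le hsub (by omega) (Set.toFinite _)
  have hinter : sep G u m ∩ sep G m v = ∅ := by
    have h3 := Set.ncard_inter_add_ncard_union (sep G u m) (sep G m v)
      (Set.toFinite _) (Set.toFinite _)
    rw [← hUeq] at h3
    have : (sep G u m ∩ sep G m v).ncard = 0 := by omega
    rwa [Set.ncard_eq_zero (Set.toFinite _)] at this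
  exact ⟨hUeq ▸ Set.subset_union_left, hUeq ▸ Set.subset_union_right, hinter⟩

lemma cSide_between (hG : IsMedianGraph G) {C : Set (Sym2 V)} (hC : C ∈ thetaClasses G)
    {u v m : V} (hm : m ∈ interval G u v) (h : cSide G C u v) :
    cSide G C u m ∧ cSide G C m v := by
  obtain ⟨h1, h2, _⟩ := sep_between hG hm
  constructor
  · by_contra hcon
    exact (h1 ⟨hC, hcon⟩).2 h
  · by_contra hcon
    exact (h2 ⟨hC, hcon⟩).2 h


/-! ### Convexity, gates, crossing, boundary -/

lemma interval_comm {u v x : V} : x ∈ interval G u v ↔ x ∈ interval G v u := by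
  rw [mem_interval, mem_interval, dcomm G u x, dcomm G x v, dcomm G u v]
  omega

def Conv (G : SimpleGraph V) (A : Set V) : Prop :=
  ∀ u ∈ A, ∀ v ∈ A, ∀ m ∈ interval G u v, m ∈ A

def HS (G : SimpleGraph V) (C : Set (Sym2 V)) (r : V) : Set V := {v | cSide G C r v}

def HSc (G : SimpleGraph V) (C : Set (Sym2 V)) (r : V) : Set V := {v | ¬ cSide G C r v}

lemma conv_HS (hG : IsMedianGraph G) {C : Set (Sym2 V)} (hC : C ∈ thetaClasses G) (r : V) :
    Conv G (HS G C r) := by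
  intro u hu v hv m hm
  have huv : cSide G C u v := by
    rw [cSide_parity hG hC u r v]
    constructor <;> intro <;> [exact hv; exact cSide_symm hG hC hu]
  have h2 := (cSide_between hG hC hm huv).1
  have : cSide G C r m := by
    rw [cSide_parity hG hC r u m]
    constructor <;> intro <;> [exact h2; exact hu]
  exact this

lemma conv_HSc (hG : IsMedianGraph G) {C : Set (Sym2 V)} (hC : C ∈ thetaClasses G) (r : V) :
    Conv G (HSc G C r) := by
  intro u hu v hv m hm
  have huv : cSide G C u v := by
    rw [cSide_parity hG hC u r v]
    constructor <;> intro h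
    · exact absurd (cSide_symm hG hC h) hu
    · exact absurd h hv
  have h2 := (cSide_between hG hC hm huv).1
  intro hrm
  apply hu
  rw [cSide_parity hG hC r m u]
  constructor <;> intro
  · exact cSide_symm hG hC h2
  · exact hrm

lemma exists_gate (hG : IsMedianGraph G) {A : Set V} (hconv : Conv G A) (hne : A.Nonempty)
    (x : V) : ∃ g ∈ A, ∀ c ∈ A, g ∈ interval G x c := by
  classical
  obtain ⟨g, hgF, hgmin⟩ := Finset.exists_min_image A.toFinite.toFinset (fun g => G.dist x g)
    (by rwa [Set.Finite.toFinset_nonempty])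
  rw [Set.Finite.mem_toFinset] at hgF
  refine ⟨g, hgF, fun c hc => ?_⟩
  obtain ⟨m, ⟨hxg, hgc, hcx⟩, _⟩ := hG.2 x g c
  have hmA : m ∈ A := hconv g hgF c hc m hgc
  rw [mem_interval] at hxg hcx
  have hmin := hgmin m (by rwa [Set.Finite.mem_toFinset])
  have hmg : G.dist m g = 0 := by omega
  have : m = g := dist_zero hG hmg
  subst this
  rw [mem_interval]
  rw [dcomm G c m, dcomm G m x, dcomm G c x] at hcx
  omega

def Crosses (G : SimpleGraph V) (C C' : Set (Sym2 V)) : Prop :=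
  ∃ a x y z : V, (cSide G C a x ∧ ¬ cSide G C' a x) ∧ (¬ cSide G C a y ∧ cSide G C' a y) ∧
    (¬ cSide G C a z ∧ ¬ cSide G C' a z)

lemma crosses_symm {C C' : Set (Sym2 V)} (h : Crosses G C C') : Crosses G C' C := by
  obtain ⟨a, x, y, z, h1, h2, h3⟩ := h
  exact ⟨a, y, x, z, ⟨h2.2, h2.1⟩, ⟨h1.2, h1.1⟩, ⟨h3.2, h3.1⟩⟩

lemma crosses_ne {C C' : Set (Sym2 V)} (h : Crosses G C C') : C ≠ C' := by
  obtain ⟨a, x, y, z, h1, _, _⟩ := h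
  rintro rfl
  exact h1.2 h1.1

lemma crosses_pick (hG : IsMedianGraph G) {C C' : Set (Sym2 V)} (hC : C ∈ thetaClasses G)
    (hC' : C' ∈ thetaClasses G) (h : Crosses G C C') (e r : V) (P1 P2 : Prop) :
    ∃ w, (cSide G C e w ↔ P1) ∧ (cSide G C' r w ↔ P2) := by
  obtain ⟨a, x, y, z, ⟨hx1, hx2⟩, ⟨hy1, hy2⟩, ⟨hz1, hz2⟩⟩ := h
  have key1 : ∀ w, cSide G C e w ↔ (cSide G C e a ↔ cSide G C a w) :=
    fun w => cSide_parity hG hC e a w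
  have key2 : ∀ w, cSide G C' r w ↔ (cSide G C' r a ↔ cSide G C' a w) :=
    fun w => cSide_parity hG hC' r a w
  have ha1 : cSide G C a a := cSide_refl hG hC a
  have ha2 : cSide G C' a a := cSide_refl hG hC' a
  by_cases hβ1 : cSide G C e a <;> by_cases hβ2 : cSide G C' r a <;>
    by_cases hp1 : P1 <;> by_cases hp2 : P2
  · exact ⟨a, by rw [key1 a]; tauto, by rw [key2 a]; tauto⟩
  · exact ⟨x, by rw [key1 x]; tauto, by rw [key2 x]; tauto⟩
  · exact ⟨y, by rw [key1 y]; tauto, by rw [key2 y]; tauto⟩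
  · exact ⟨z, by rw [key1 z]; tauto, by rw [key2 z]; tauto⟩
  · exact ⟨x, by rw [key1 x]; tauto, by rw [key2 x]; tauto⟩
  · exact ⟨a, by rw [key1 a]; tauto, by rw [key2 a]; tauto⟩
  · exact ⟨z, by rw [key1 z]; tauto, by rw [key2 z]; tauto⟩
  · exact ⟨y, by rw [key1 y]; tauto, by rw [key2 y]; tauto⟩
  · exact ⟨y, by rw [key1 y]; tauto, by rw [key2 y]; tauto⟩
  · exact ⟨z, by rw [key1 z]; tauto, by rw [key2 z]; tauto⟩
  · exact ⟨a, by rw [key1 a]; tauto, by rw [key2 a]; tauto⟩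
  · exact ⟨x, by rw [key1 x]; tauto, by rw [key2 x]; tauto⟩
  · exact ⟨z, by rw [key1 z]; tauto, by rw [key2 z]; tauto⟩
  · exact ⟨y, by rw [key1 y]; tauto, by rw [key2 y]; tauto⟩
  · exact ⟨x, by rw [key1 x]; tauto, by rw [key2 x]; tauto⟩
  · exact ⟨a, by rw [key1 a]; tauto, by rw [key2 a]; tauto⟩

lemma cross_edge_class (hG : IsMedianGraph G) {C : Set (Sym2 V)} (hC : C ∈ thetaClasses G)
    {v w : V} (hvw : G.Adj v w) : ¬ cSide G C v w ↔ C = eCls G s(v, w) := by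
  constructor
  · intro h
    by_contra hne
    exact h (cSide_edge_ne hG hC hvw hne)
  · rintro rfl
    have hedge : s(v, w) ∈ G.edgeSet := hvw
    rw [cSide_iff_rep hG hC (eCls_mem_self hedge)]
    exact not_sSide_ends hG hvw

lemma sep_adj_eq (hG : IsMedianGraph G) {C : Set (Sym2 V)} (hC : C ∈ thetaClasses G)
    {v w : V} (hvw : G.Adj v w) (h : ¬ cSide G C v w) : sep G v w = {C} := by
  have hCe : C = eCls G s(v, w) := (cross_edge_class hG hC hvw).1 h
  have hmem : C ∈ sep G v w := ⟨hC, h⟩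
  have h1 : (sep G v w).ncard = 1 := by rw [sep_ncard hG, dist_adj hG hvw]
  obtain ⟨D, hD⟩ := Set.ncard_eq_one.1 h1
  rw [hD] at hmem ⊢
  rw [Set.mem_singleton_iff] at hmem
  rw [hmem]

lemma class_eq_of_same_sides (hG : IsMedianGraph G) {C D : Set (Sym2 V)}
    (hC : C ∈ thetaClasses G) (hD : D ∈ thetaClasses G) (A : V)
    (h : ∀ v, cSide G C A v ↔ cSide G D A v) : C = D := by
  obtain ⟨a, b, hab, hmem, hCe⟩ := theta_rep hC
  have hnC : ¬ cSide G C a b := by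
    rw [cSide_iff_rep hG hC hmem]
    exact not_sSide_ends hG hab
  have hnD : ¬ cSide G D a b := by
    intro hside
    apply hnC
    rw [cSide_parity hG hC a A b]
    rw [cSide_parity hG hD a A b] at hside
    have e1 : cSide G C a A ↔ cSide G D a A := by
      constructor <;> intro hh
      · exact cSide_symm hG hD ((h a).1 (cSide_symm hG hC hh))
      · exact cSide_symm hG hC ((h a).2 (cSide_symm hG hD hh))
    have e2 := h b
    tauto
  rw [hCe]
  exact ((cross_edge_class hG hD hab).1 hnD).symm ▸ rfl

def bdry (G : SimpleGraph V) (C : Set (Sym2 V)) (r : V) : Set V :=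
  {v | cSide G C r v ∧ ∃ w, G.Adj v w ∧ ¬ cSide G C r w}

lemma bdry_nonempty (hG : IsMedianGraph G) {C : Set (Sym2 V)} (hC : C ∈ thetaClasses G)
    (r : V) : (bdry G C r).Nonempty := by
  obtain ⟨a, b, hab, hmem, hCe⟩ := theta_rep hC
  have hnC : ¬ cSide G C a b := by
    rw [cSide_iff_rep hG hC hmem]; exact not_sSide_ends hG hab
  by_cases hra : cSide G C r a
  · refine ⟨a, hra, b, hab, fun hrb => hnC ?_⟩
    rw [cSide_parity hG hC a r b]
    constructor <;> intro
    · exact hrb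
    · exact cSide_symm hG hC hra
  · refine ⟨b, ?_, a, hab.symm, hra⟩
    rw [cSide_parity hG hC r a b]
    constructor <;> intro <;> tauto

lemma bdry_conv (hG : IsMedianGraph G) {C : Set (Sym2 V)} (hC : C ∈ thetaClasses G) (r : V) :
    Conv G (bdry G C r) := by
  rintro v ⟨hrv, w, hvw, hrw⟩ v' ⟨hrv', w', hvw', hrw'⟩ z hz
  have hvv' : cSide G C v v' := by
    rw [cSide_parity hG hC v r v']
    constructor <;> intro
    · exact hrv'
    · exact cSide_symm hG hC hrv
  have hvz := (cSide_between hG hC hz hvv').1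
  have hrz : cSide G C r z := by
    rw [cSide_parity hG hC r v z]
    constructor <;> intro
    · exact hvz
    · exact hrv
  -- median of w, w', z
  obtain ⟨m, ⟨hww', hw'z, hzw⟩, _⟩ := hG.2 w w' z
  have hww'side : cSide G C w w' := by
    rw [cSide_parity hG hC w r w']
    constructor <;> intro h
    · exact absurd (cSide_symm hG hC h) hrw
    · exact absurd h hrw'
  have hwm := (cSide_between hG hC hww' hww'side).1
  have hrm : ¬ cSide G C r m := by
    intro h
    apply hrw
    rw [cSide_parity hG hC r m w]
    constructor <;> intro
    · exact cSide_symm hG hC hwm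
    · exact h
  -- the cut of the edge (v, w) is C
  have hnvw : ¬ cSide G C v w := by
    intro h
    apply hrw
    rw [cSide_parity hG hC r v w]
    constructor <;> intro
    · exact h
    · exact hrv
  have hnv'w' : ¬ cSide G C v' w' := by
    intro h
    apply hrw'
    rw [cSide_parity hG hC r v' w']
    constructor <;> intro
    · exact h
    · exact hrv'
  have hsepvw : sep G v w = {C} := sep_adj_eq hG hC hvw hnvw
  have hsepv'w' : sep G v' w' = {C} := sep_adj_eq hG hC hvw' hnv'w'
  -- sep z m = {C}
  have hsepzm : sep G z m = {C} := by
    have hCzm : C ∈ sep G z m := by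
      refine ⟨hC, fun h => hrm ?_⟩
      rw [cSide_parity hG hC r z m]
      constructor <;> intro
      · exact h
      · exact hrz
    refine Set.eq_of_subset_of_ncard_le ?_ ?_ (Set.toFinite _)
    · intro D hD
      obtain ⟨hDt, hDside⟩ := hD
      by_contra hDC
      rw [Set.mem_singleton_iff] at hDC
      have h1 : D ∈ sep G z w := (sep_between hG hzw).1 ⟨hDt, hDside⟩
      have h2 : D ∈ sep G z v := by
        rcases sep_triangle hG z v w h1 with h' | h'
        · exact h'
        · rw [hsepvw] at h'
          exact absurd h' hDC
      have h3 : D ∈ sep G z w' := by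
        have hmz : D ∈ sep G m z := by rw [sep_symm hG m z]; exact ⟨hDt, hDside⟩
        have h' := (sep_between hG hw'z).2.1 hmz
        rw [sep_symm hG w' z] at h'
        exact h'
      have h4 : D ∈ sep G z v' := by
        rcases sep_triangle hG z v' w' h3 with h' | h'
        · exact h'
        · rw [hsepv'w'] at h'
          exact absurd h' hDC
      have h2' : D ∈ sep G v z := by rw [sep_symm hG v z]; exact h2
      have h5 : D ∈ sep G v v' := (sep_between hG hz).1 h2'
      apply h5.2
      rw [cSide_parity hG hDt v z v']
      constructor <;> intro h
      · exact absurd (cSide_symm hG hDt h) h2.2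
      · exact absurd h h4.2
    · rw [Set.ncard_singleton]
      have h6 : 0 < (sep G z m).ncard := (Set.ncard_pos (Set.toFinite _)).2 ⟨C, hCzm⟩
      omega
  have hdzm : G.dist z m = 1 := by rw [← sep_ncard hG, hsepzm, Set.ncard_singleton]
  exact ⟨hrz, m, dist_eq_one_iff_adj.1 hdzm, hrm⟩

/-! ### The cube theorem -/

lemma mem_sep_comp (hG : IsMedianGraph G) {D : Set (Sym2 V)} (hDt : D ∈ thetaClasses G)
    (x y z : V) : D ∈ sep G x z ↔ ¬ (D ∈ sep G x y ↔ D ∈ sep G y z) := by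
  simp only [mem_sep, hDt, true_and]
  have := cSide_parity hG hDt x y z
  tauto


lemma logic1 (X Q L : Prop) (h1 : Q → ¬ X) (hll : ¬ L) :
    (¬ (X ↔ ¬ (Q ↔ X))) ↔ ((L ∧ X) ∨ Q) := by tauto

lemma logic2 (X Q L : Prop) (h1 : Q → ¬ X) (hL : L) :
    (¬ (X ↔ Q)) ↔ ((L ∧ X) ∨ Q) := by tauto

lemma logic2' (X Q L : Prop) (h1 : Q → ¬ X) (hL : L) :
    (¬ (Q ↔ X)) ↔ ((L ∧ X) ∨ Q) := by tauto

lemma logic3 (X Q L : Prop) (hll : ¬ L) : Q ↔ ((L ∧ X) ∨ Q) := by tauto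

set_option maxHeartbeats 1000000 in
theorem cube_family (hG : IsMedianGraph G) : ∀ (k : ℕ) (C : Fin k → Set (Sym2 V)),
    (∀ i, C i ∈ thetaClasses G) → (∀ i j, i ≠ j → Crosses G (C i) (C j)) →
    ∃ φ : (Fin k → Bool) → V, ∀ σ τ,
      sep G (φ σ) (φ τ) = {D | ∃ i, σ i ≠ τ i ∧ D = C i} := by
  intro k
  induction k with
  | zero =>
    intro C _ _
    obtain ⟨v⟩ := (conn hG).nonempty
    refine ⟨fun _ => v, fun σ τ => ?_⟩
    rw [sep_self hG]
    ext D
    simp only [Set.mem_empty_iff_false, Set.mem_setOf_eq, false_iff]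
    rintro ⟨i, _, _⟩
    exact i.elim0
  | succ k IH =>
    intro C hmem hcr
    set Ck := C (Fin.last k) with hCkdef
    set C' : Fin k → Set (Sym2 V) := fun i => C i.castSucc with hC'def
    have hmem' : ∀ i, C' i ∈ thetaClasses G := fun i => hmem _
    have hcr' : ∀ i j, i ≠ j → Crosses G (C' i) (C' j) :=
      fun i j hij => hcr _ _ (fun h => hij (Fin.castSucc_injective _ h))
    obtain ⟨ψ, hψ⟩ := IH C' hmem' hcr'
    have hCkt : Ck ∈ thetaClasses G := hmem _
    have hne_last : ∀ i : Fin k, C' i ≠ Ck :=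
      fun i => crosses_ne (hcr i.castSucc (Fin.last k) (Fin.castSucc_lt_last i).ne)
    have hCinj : ∀ i j : Fin k, C' i = C' j → i = j := by
      intro i j h
      by_contra hij
      exact (crosses_ne (hcr' i j hij)) h
    set r := ψ (fun _ => false) with hrdef
    set B := bdry G Ck r with hBdef
    have hBne : B.Nonempty := bdry_nonempty hG hCkt r
    have hBconv : Conv G B := bdry_conv hG hCkt r
    have hgate : ∀ σ : Fin k → Bool, ∃ g ∈ B, ∀ c ∈ B, g ∈ interval G (ψ σ) c :=
      fun σ => exists_gate hG hBconv hBne (ψ σ)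
    choose P hPB hPI using hgate
    -- (G1) gate projection does not add separations
    have hG1 : ∀ σ τ, sep G (P σ) (P τ) ⊆ sep G (ψ σ) (ψ τ) := by
      intro σ τ D hD
      obtain ⟨hDt, hDs⟩ := hD
      by_contra hcon
      have hside : cSide G D (ψ σ) (ψ τ) := by
        by_contra h2
        exact hcon ⟨hDt, h2⟩
      have hn1 : ¬ cSide G D (ψ τ) (P σ) := by
        intro h2
        exact hDs (cSide_symm hG hDt (cSide_between hG hDt (hPI τ (P σ) (hPB σ)) h2).2)
      have hn2 : ¬ cSide G D (ψ σ) (P τ) := by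
        intro h2
        exact hDs (cSide_between hG hDt (hPI σ (P τ) (hPB τ)) h2).2
      apply hn1
      have p1 := cSide_parity hG hDt (ψ τ) (ψ σ) (P σ)
      have p2 := cSide_parity hG hDt (ψ σ) (P τ) (P σ)
      have p3 := cSide_parity hG hDt (P τ) (P σ) (P τ)
      have hsymm1 : cSide G D (ψ τ) (ψ σ) := cSide_symm hG hDt hside
      have hnPP : ¬ cSide G D (P τ) (P σ) := fun h2 => hDs (cSide_symm hG hDt h2)
      tauto
    -- (G2) flip gives exactly one separating class
    have hflip : ∀ (σ : Fin k → Bool) (i : Fin k),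
        sep G (P σ) (P (Function.update σ i (!(σ i)))) = {C' i} := by
      intro σ i
      set τ := Function.update σ i (!(σ i)) with hτdef
      have hτi : τ i = !(σ i) := by rw [hτdef, Function.update_self]
      have hτj : ∀ j, j ≠ i → τ j = σ j := by
        intro j hj
        rw [hτdef, Function.update_of_ne hj]
      have hdiff : ∀ j, (σ j ≠ τ j) ↔ j = i := by
        intro j
        by_cases hj : j = i
        · subst hj
          simp only [hτi, eq_self_iff_true, iff_true]
          cases σ j <;> simp
        · simp only [hτj j hj, hj, iff_false, ne_eq, not_not]
      have hsepψ : sep G (ψ σ) (ψ τ) = {C' i} := by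
        rw [hψ]
        ext D
        simp only [Set.mem_setOf_eq, Set.mem_singleton_iff]
        constructor
        · rintro ⟨j, hj, rfl⟩
          rw [hdiff j] at hj
          rw [hj]
        · rintro rfl
          exact ⟨i, (hdiff i).2 rfl, rfl⟩
      have hsub : sep G (P σ) (P τ) ⊆ {C' i} := by
        rw [← hsepψ]
        exact hG1 σ τ
      rcases Set.subset_singleton_iff_eq.1 hsub with hempty | hok
      · exfalso
        have hPeq : P σ = P τ := (sep_eq_empty_iff hG).1 hempty
        have hCit : C' i ∈ thetaClasses G := hmem' i
        have hψs : ¬ cSide G (C' i) (ψ σ) (ψ τ) := by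
          have hmm : C' i ∈ sep G (ψ σ) (ψ τ) := by
            rw [hsepψ]; rfl
          exact hmm.2
        have hψs' : ¬ cSide G (C' i) (ψ τ) (ψ σ) := fun h => hψs (cSide_symm hG hCit h)
        have honeside : (∀ c ∈ B, cSide G (C' i) (ψ σ) c) ∨
            (∀ c ∈ B, cSide G (C' i) (ψ τ) c) := by
          by_contra hcon
          push_neg at hcon
          obtain ⟨⟨c, hcB, hc⟩, ⟨c', hc'B, hc'⟩⟩ := hcon
          have hcτ : cSide G (C' i) (ψ τ) c := by
            rw [cSide_parity hG hCit (ψ τ) (ψ σ) c]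
            exact iff_of_false hψs' hc
          have hc'σ : cSide G (C' i) (ψ σ) c' := by
            rw [cSide_parity hG hCit (ψ σ) (ψ τ) c']
            exact iff_of_false hψs hc'
          have hgτ : cSide G (C' i) (ψ τ) (P σ) := by
            have hb := (cSide_between hG hCit (hPI τ c hcB) hcτ).1
            rw [← hPeq] at hb
            exact hb
          have hgσ : cSide G (C' i) (ψ σ) (P σ) :=
            (cSide_between hG hCit (hPI σ c' hc'B) hc'σ).1
          apply hψs
          rw [cSide_parity hG hCit (ψ σ) (P σ) (ψ τ)]
          exact ⟨fun _ => cSide_symm hG hCit hgτ, fun _ => hgσ⟩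
        have hcrik : Crosses G (C' i) Ck :=
          hcr i.castSucc (Fin.last k) (Fin.castSucc_lt_last i).ne
        have key : ∀ e : V, (∀ c ∈ B, cSide G (C' i) e c) → False := by
          intro e hall
          obtain ⟨A, hA1, hA2⟩ := crosses_pick hG hCit hCkt hcrik e r False True
          rw [iff_false] at hA1
          rw [iff_true] at hA2
          have hHScconv : Conv G (HSc G Ck r) := conv_HSc hG hCkt r
          have hHScne : (HSc G Ck r).Nonempty := by
            obtain ⟨v0, hv0s, w0, _, hw0s⟩ := hBne
            exact ⟨w0, hw0s⟩
          obtain ⟨h1, hh1mem, hh1I⟩ := exists_gate hG hHScconv hHScne A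
          have hHSconv : Conv G (HS G Ck r) := conv_HS hG hCkt r
          have hHSne : (HS G Ck r).Nonempty := ⟨r, cSide_refl hG hCkt r⟩
          obtain ⟨h2, hh2mem, hh2I⟩ := exists_gate hG hHSconv hHSne h1
          have hCkin : Ck ∈ sep G h1 h2 := by
            refine ⟨hCkt, fun hs => hh1mem ?_⟩
            rw [cSide_parity hG hCkt r h2 h1]
            exact ⟨fun _ => cSide_symm hG hCkt hs, fun _ => hh2mem⟩
          have hseph : sep G h1 h2 = {Ck} := by
            ext D
            simp only [Set.mem_singleton_iff]
            constructor
            · rintro ⟨hDt, hDs⟩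
              by_contra hDC
              have step1 : ∀ c ∈ HS G Ck r, ¬ cSide G D h1 c := by
                intro c hc hside
                exact hDs (cSide_between hG hDt (hh2I c hc) hside).1
              have step2 : ∀ c ∈ HSc G Ck r, ¬ cSide G D A c := by
                intro c hc hside
                exact step1 A hA2 (cSide_symm hG hDt
                  (cSide_between hG hDt (hh1I c hc) hside).1)
              have step3 : ∀ v, cSide G D A v ↔ cSide G Ck A v := by
                intro v
                by_cases hv : cSide G Ck r v
                · have hR : cSide G Ck A v := by
                    rw [cSide_parity hG hCkt A r v]
                    exact ⟨fun _ => hv, fun _ => cSide_symm hG hCkt hA2⟩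
                  have hL : cSide G D A v := by
                    have hn1 : ¬ cSide G D A h1 :=
                      fun h => step1 A hA2 (cSide_symm hG hDt h)
                    have hn2 : ¬ cSide G D h1 v := step1 v hv
                    rw [cSide_parity hG hDt A h1 v]
                    exact iff_of_false hn1 hn2
                  exact iff_of_true hL hR
                · have hL : ¬ cSide G D A v := step2 v hv
                  have hR : ¬ cSide G Ck A v := by
                    intro hs
                    apply hv
                    rw [cSide_parity hG hCkt r A v]
                    exact ⟨fun _ => hs, fun _ => hA2⟩
                  exact iff_of_false hL hR
              exact hDC (class_eq_of_same_sides hG hDt hCkt A step3)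
            · rintro rfl
              exact hCkin
          have hd12 : G.dist h1 h2 = 1 := by
            rw [← sep_ncard hG, hseph, Set.ncard_singleton]
          have hh2B : h2 ∈ B := ⟨hh2mem, h1, (dist_eq_one_iff_adj.1 hd12).symm, hh1mem⟩
          have hallh2 : cSide G (C' i) e h2 := hall h2 hh2B
          obtain ⟨c1, hc11, hc12⟩ := crosses_pick hG hCit hCkt hcrik e r False False
          rw [iff_false] at hc11
          rw [iff_false] at hc12
          have hAe : ¬ cSide G (C' i) A e := fun h => hA1 (cSide_symm hG hCit h)
          have hAc1 : cSide G (C' i) A c1 := by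
            rw [cSide_parity hG hCit A e c1]
            exact iff_of_false hAe hc11
          have hbA : cSide G (C' i) A h1 := (cSide_between hG hCit (hh1I c1 hc12) hAc1).1
          have hneh1 : ¬ cSide G (C' i) e h1 := by
            intro h
            apply hA1
            rw [cSide_parity hG hCit e h1 A]
            exact ⟨fun _ => cSide_symm hG hCit hbA, fun _ => h⟩
          have hb2 : cSide G (C' i) h1 h2 :=
            (cSide_between hG hCit (hh2I A hA2) (cSide_symm hG hCit hbA)).1
          have hfin : ¬ cSide G (C' i) e h2 := by
            rw [cSide_parity hG hCit e h1 h2]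
            intro hiff
            exact hneh1 (hiff.2 hb2)
          exact hfin hallh2
        rcases honeside with h | h
        · exact key (ψ σ) h
        · exact key (ψ τ) h
      · exact hok
    -- (G3) full separation formula for the gates
    have hPfull : ∀ (n : ℕ) (σ τ : Fin k → Bool),
        (Finset.univ.filter (fun j => σ j ≠ τ j)).card = n →
        sep G (P σ) (P τ) = {D | ∃ j, σ j ≠ τ j ∧ D = C' j} := by
      intro n
      induction n using Nat.strong_induction_on with
      | _ n IHn =>
        intro σ τ hn
        rcases Nat.eq_zero_or_pos n with h0 | hpos
        · subst h0
          have hστ : σ = τ := by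
            funext j
            by_contra hj
            have hjin : j ∈ Finset.univ.filter (fun j => σ j ≠ τ j) := by simp [hj]
            rw [Finset.card_eq_zero] at hn
            rw [hn] at hjin
            simp at hjin
          subst hστ
          rw [sep_self hG]
          ext D
          simp only [Set.mem_empty_iff_false, Set.mem_setOf_eq, false_iff]
          rintro ⟨j, hj, _⟩
          exact hj rfl
        · have hex : ∃ i, σ i ≠ τ i := by
            by_contra hcon
            push_neg at hcon
            have hempty : (Finset.univ.filter fun j => σ j ≠ τ j) = ∅ := by
              ext j
              simp [hcon j]
            rw [hempty] at hn
            simp at hn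
            omega
          obtain ⟨i, hi⟩ := hex
          set τ' := Function.update τ i (!(τ i)) with hτ'def
          have hτ'i : τ' i = σ i := by
            rw [hτ'def, Function.update_self]
            cases hσi : σ i <;> cases hτi : τ i <;> simp_all
          have hτ'j : ∀ j, j ≠ i → τ' j = τ j := by
            intro j hj
            rw [hτ'def, Function.update_of_ne hj]
          have hΔ : (Finset.univ.filter fun j => σ j ≠ τ' j) =
              (Finset.univ.filter fun j => σ j ≠ τ j).erase i := by
            ext j
            by_cases hj : j = i
            · subst hj
              simp [hτ'i]
            · simp [hτ'j j hj, hj]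
          have hcard' : (Finset.univ.filter fun j => σ j ≠ τ' j).card = n - 1 := by
            rw [hΔ, Finset.card_erase_of_mem (by simp [hi]), hn]
          have hS := IHn (n - 1) (by omega) σ τ' hcard'
          have hback : τ = Function.update τ' i (!(τ' i)) := by
            funext j
            by_cases hj : j = i
            · subst hj
              rw [Function.update_self, hτ'def, Function.update_self, Bool.not_not]
            · rw [Function.update_of_ne hj, hτ'j j hj]
          have hflip' : sep G (P τ') (P τ) = {C' i} := by
            conv_lhs => rw [hback]
            exact hflip τ' i
          have hCinS : C' i ∉ sep G (P σ) (P τ') := by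
            rw [hS]
            rintro ⟨j, hj, hEq⟩
            have hji : j = i := hCinj j i hEq.symm
            subst hji
            rw [hτ'i] at hj
            exact hj rfl
          ext D
          by_cases hDt : D ∈ thetaClasses G
          · have par := cSide_parity hG hDt (P σ) (P τ') (P τ)
            simp only [Set.mem_setOf_eq]
            constructor
            · intro hD
              by_cases h1 : cSide G D (P σ) (P τ')
              · have h2 : ¬ cSide G D (P τ') (P τ) := by
                  have h3 := hD.2
                  tauto
                have hmm : D ∈ sep G (P τ') (P τ) := ⟨hDt, h2⟩
                rw [hflip'] at hmm
                rw [Set.mem_singleton_iff] at hmm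
                exact ⟨i, hi, hmm⟩
              · have hmm : D ∈ sep G (P σ) (P τ') := ⟨hDt, h1⟩
                rw [hS] at hmm
                obtain ⟨j, hj, hEq⟩ := hmm
                refine ⟨j, ?_, hEq⟩
                by_cases hji : j = i
                · subst hji
                  exact hi
                · rw [← hτ'j j hji]
                  exact hj
            · rintro ⟨j, hj, rfl⟩
              refine ⟨hDt, ?_⟩
              by_cases hji : j = i
              · subst hji
                have hA : cSide G (C' j) (P σ) (P τ') := by
                  by_contra h2
                  exact hCinS ⟨hDt, h2⟩
                have hB : ¬ cSide G (C' j) (P τ') (P τ) := by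
                  have hmm : C' j ∈ sep G (P τ') (P τ) := by
                    rw [hflip']; rfl
                  exact hmm.2
                tauto
              · have hA : ¬ cSide G (C' j) (P σ) (P τ') := by
                  have hmm : C' j ∈ sep G (P σ) (P τ') := by
                    rw [hS]
                    exact ⟨j, by rw [hτ'j j hji]; exact hj, rfl⟩
                  exact hmm.2
                have hB : cSide G (C' j) (P τ') (P τ) := by
                  by_contra h2
                  have hmm : C' j ∈ sep G (P τ') (P τ) := ⟨hDt, h2⟩
                  rw [hflip'] at hmm
                  exact hji (hCinj j i hmm)
                tauto
          · constructor
            · intro hD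
              exact absurd hD.1 hDt
            · rintro ⟨j, _, rfl⟩
              exact absurd (hmem' j) hDt
    -- (G4) assemble the full cube
    have hacross : ∀ v ∈ B, ∃ w, G.Adj v w ∧ ¬ cSide G Ck r w := fun v hv => hv.2
    classical
    set κ : V → V := fun v => if hv : v ∈ B then Classical.choose (hacross v hv) else v
      with hκdef
    have hκ1 : ∀ v (hv : v ∈ B), G.Adj v (κ v) ∧ ¬ cSide G Ck r (κ v) := by
      intro v hv
      rw [hκdef]
      simp only [dif_pos hv]
      exact Classical.choose_spec (hacross v hv)
    have hsepκ : ∀ v (hv : v ∈ B), sep G v (κ v) = {Ck} := by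
      intro v hv
      obtain ⟨hadj, hwside⟩ := hκ1 v hv
      refine sep_adj_eq hG hCkt hadj ?_
      intro hs
      apply hwside
      rw [cSide_parity hG hCkt r v (κ v)]
      exact ⟨fun _ => hs, fun _ => hv.1⟩
    set Φ : (Fin (k+1) → Bool) → V := fun σ =>
      if σ (Fin.last k) = true then κ (P (fun j => σ j.castSucc))
      else P (fun j => σ j.castSucc) with hΦdef
    refine ⟨Φ, ?_⟩
    intro σ τ
    have hΦpos : ∀ ρ : Fin (k+1) → Bool, ρ (Fin.last k) = true →
        Φ ρ = κ (P (fun j => ρ j.castSucc)) := by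
      intro ρ h
      rw [hΦdef]
      simp only [if_pos h]
    have hΦneg : ∀ ρ : Fin (k+1) → Bool, ¬ (ρ (Fin.last k) = true) →
        Φ ρ = P (fun j => ρ j.castSucc) := by
      intro ρ h
      rw [hΦdef]
      simp only [if_neg h]
    have hfullσ : sep G (P fun j => σ j.castSucc) (P fun j => τ j.castSucc) =
        {D | ∃ j : Fin k, σ j.castSucc ≠ τ j.castSucc ∧ D = C' j} :=
      hPfull _ (fun j => σ j.castSucc) (fun j => τ j.castSucc) rfl
    have hKs : sep G (P (fun j => σ j.castSucc)) (κ (P (fun j => σ j.castSucc))) = {Ck} :=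
      hsepκ _ (hPB _)
    have hKt : sep G (P (fun j => τ j.castSucc)) (κ (P (fun j => τ j.castSucc))) = {Ck} :=
      hsepκ _ (hPB _)
    have htarget : ∀ D, (D ∈ {E | ∃ i, σ i ≠ τ i ∧ E = C i}) ↔
        ((σ (Fin.last k) ≠ τ (Fin.last k)) ∧ D = Ck) ∨
        (∃ j : Fin k, σ j.castSucc ≠ τ j.castSucc ∧ D = C' j) := by
      intro D
      simp only [Set.mem_setOf_eq]
      constructor
      · rintro ⟨i, hi, rfl⟩
        rcases Fin.eq_castSucc_or_eq_last i with ⟨j, rfl⟩ | rfl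
        · exact Or.inr ⟨j, hi, rfl⟩
        · exact Or.inl ⟨hi, rfl⟩
      · rintro (⟨hi, rfl⟩ | ⟨j, hj, rfl⟩)
        · exact ⟨Fin.last k, hi, rfl⟩
        · exact ⟨j.castSucc, hj, rfl⟩
    have hSnotCk : ∀ D, (∃ j : Fin k, σ j.castSucc ≠ τ j.castSucc ∧ D = C' j) → D ≠ Ck := by
      rintro D ⟨j, _, rfl⟩
      exact hne_last j
    have hthetaR : ∀ D, (D ∈ {E | ∃ i, σ i ≠ τ i ∧ E = C i}) → D ∈ thetaClasses G := by
      rintro D ⟨i, _, rfl⟩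
      exact hmem i
    by_cases hσl : σ (Fin.last k) = true <;> by_cases hτl : τ (Fin.last k) = true
    · rw [hΦpos σ hσl, hΦpos τ hτl]
      ext D
      rcases em (D ∈ thetaClasses G) with hDt | hDt
      · rw [mem_sep_comp hG hDt _ (P (fun j => σ j.castSucc)) _,
          mem_sep_comp hG hDt (P (fun j => σ j.castSucc)) (P (fun j => τ j.castSucc)) _,
          sep_symm hG (κ (P (fun j => σ j.castSucc))) (P (fun j => σ j.castSucc)),
          hKs, hKt, hfullσ, htarget D]
        simp only [Set.mem_singleton_iff, Set.mem_setOf_eq]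
        exact logic1 _ _ _ (hSnotCk D) (by rw [hσl, hτl]; exact fun h => h rfl)
      · constructor
        · intro hD
          exact absurd hD.1 hDt
        · intro hD
          exact absurd (hthetaR D hD) hDt
    · rw [hΦpos σ hσl, hΦneg τ hτl]
      ext D
      rcases em (D ∈ thetaClasses G) with hDt | hDt
      · rw [mem_sep_comp hG hDt _ (P (fun j => σ j.castSucc)) _,
          sep_symm hG (κ (P (fun j => σ j.castSucc))) (P (fun j => σ j.castSucc)),
          hKs, hfullσ, htarget D]
        simp only [Set.mem_singleton_iff, Set.mem_setOf_eq]
        exact logic2 _ _ _ (hSnotCk D) (by rw [hσl]; exact fun h => hτl h.symm)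
      · constructor
        · intro hD
          exact absurd hD.1 hDt
        · intro hD
          exact absurd (hthetaR D hD) hDt
    · rw [hΦneg σ hσl, hΦpos τ hτl]
      ext D
      rcases em (D ∈ thetaClasses G) with hDt | hDt
      · rw [mem_sep_comp hG hDt _ (P (fun j => τ j.castSucc)) _,
          hKt, hfullσ, htarget D]
        simp only [Set.mem_singleton_iff, Set.mem_setOf_eq]
        exact logic2' _ _ _ (hSnotCk D) (by rw [hτl]; exact fun h => hσl h)
      · constructor
        · intro hD
          exact absurd hD.1 hDt
        · intro hD
          exact absurd (hthetaR D hD) hDt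
    · rw [hΦneg σ hσl, hΦneg τ hτl]
      ext D
      rcases em (D ∈ thetaClasses G) with hDt | hDt
      · rw [hfullσ, htarget D]
        simp only [Set.mem_setOf_eq]
        exact logic3 _ _ _ (by
          simp only [ne_eq, not_not]
          cases hσv : σ (Fin.last k) <;> cases hτv : τ (Fin.last k) <;> simp_all)
      · constructor
        · intro hD
          exact absurd hD.1 hDt
        · intro hD
          exact absurd (hthetaR D hD) hDt

/-! ### Downward classes -/

def dcls (G : SimpleGraph V) (v0 u : V) : Set (Set (Sym2 V)) :=
  {C | ∃ x, G.Adj u x ∧ G.dist v0 x + 1 = G.dist v0 u ∧ C = eCls G s(u, x)}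

lemma dcls_theta {G : SimpleGraph V} {v0 u : V} {C : Set (Sym2 V)} (h : C ∈ dcls G v0 u) :
    C ∈ thetaClasses G := by
  obtain ⟨x, hadj, _, rfl⟩ := h
  exact eCls_mem_theta hadj

lemma down_edge_own (hG : IsMedianGraph G) {u x : V} (hadj : G.Adj u x) :
    ¬ cSide G (eCls G s(u, x)) u x :=
  (cross_edge_class hG (eCls_mem_theta hadj) hadj).2 rfl

lemma down_edge_base (hG : IsMedianGraph G) {v0 u x : V} (hadj : G.Adj u x)
    (hdown : G.dist v0 x + 1 = G.dist v0 u) : cSide G (eCls G s(u, x)) v0 x := by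
  have hedge : s(u, x) ∈ G.edgeSet := hadj
  rw [cSide_iff_rep hG (eCls_mem_theta hadj) (eCls_mem_self hedge), sSide_iff hG hadj]
  rw [dcomm G x u, dist_adj hG hadj, SimpleGraph.dist_self]
  constructor <;> intro <;> omega

lemma down_dists (hG : IsMedianGraph G) {v0 u x y : V} (hx : G.Adj u x) (hy : G.Adj u y)
    (hdx : G.dist v0 x + 1 = G.dist v0 u) (hdy : G.dist v0 y + 1 = G.dist v0 u)
    (hxy : x ≠ y) : G.dist x y = 2 := by
  have hnadj : ¬ G.Adj x y := by
    intro h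
    have := adj_cases hG h v0
    omega
  have hle : G.dist x y ≤ 2 := by
    have t1 : G.dist x y ≤ G.dist x u + G.dist u y := (conn hG).dist_triangle
    rw [dcomm G x u, dist_adj hG hx, dist_adj hG hy] at t1
    omega
  have h0 : G.dist x y ≠ 0 := fun h => hxy (dist_zero hG h)
  have h1 : G.dist x y ≠ 1 := fun h => hnadj (dist_eq_one_iff_adj.1 h)
  omega

lemma down_side_other (hG : IsMedianGraph G) {v0 u x y : V} (hx : G.Adj u x) (hy : G.Adj u y)
    (hdx : G.dist v0 x + 1 = G.dist v0 u) (hdy : G.dist v0 y + 1 = G.dist v0 u)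
    (hxy : x ≠ y) : cSide G (eCls G s(u, x)) u y := by
  have hedge : s(u, x) ∈ G.edgeSet := hx
  rw [cSide_iff_rep hG (eCls_mem_theta hx) (eCls_mem_self hedge), sSide_iff hG hx]
  rw [SimpleGraph.dist_self, dist_adj hG hx, dcomm G y u, dist_adj hG hy]
  have h2 : G.dist y x = 2 := by
    rw [dcomm G y x]
    exact down_dists hG hx hy hdx hdy hxy
  rw [h2]
  constructor <;> intro <;> omega

lemma down_distinct (hG : IsMedianGraph G) {v0 u x y : V} (hx : G.Adj u x) (hy : G.Adj u y)
    (hdx : G.dist v0 x + 1 = G.dist v0 u) (hdy : G.dist v0 y + 1 = G.dist v0 u)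
    (hxy : x ≠ y) : eCls G s(u, x) ≠ eCls G s(u, y) := by
  intro hEq
  have hside : cSide G (eCls G s(u, y)) u x :=
    down_side_other hG hy hx hdy hdx (Ne.symm hxy)
  rw [← hEq] at hside
  exact down_edge_own hG hx hside

lemma down_crosses (hG : IsMedianGraph G) {v0 u x y : V} (hx : G.Adj u x) (hy : G.Adj u y)
    (hdx : G.dist v0 x + 1 = G.dist v0 u) (hdy : G.dist v0 y + 1 = G.dist v0 u)
    (hxy : x ≠ y) : Crosses G (eCls G s(u, x)) (eCls G s(u, y)) := by
  have hl1 : 1 ≤ G.dist v0 x := by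
    by_contra h
    push_neg at h
    have h1 : v0 = x := dist_zero hG (by omega)
    have h2 : v0 = y := dist_zero hG (by omega)
    exact hxy (h1 ▸ h2 ▸ rfl)
  have hd2 : G.dist x y = 2 := down_dists hG hx hy hdx hdy hxy
  obtain ⟨m, ⟨hm1, hm2, hm3⟩, _⟩ := hG.2 x y v0
  rw [mem_interval] at hm1 hm2 hm3
  rw [hd2] at hm1
  have hmx : m ≠ x := by
    intro he
    rw [he] at hm2
    rw [dcomm G y x, hd2, dcomm G x v0, dcomm G y v0] at hm2
    omega
  have hmy : m ≠ y := by
    intro he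
    rw [he] at hm3
    rw [dcomm G y x, hd2] at hm3
    omega
  have hxm1 : G.dist x m = 1 := by
    have n1 : G.dist x m ≠ 0 := fun h0 => hmx (dist_zero hG h0).symm
    have n2 : G.dist m y ≠ 0 := fun h0 => hmy (dist_zero hG h0)
    omega
  have hmy1 : G.dist m y = 1 := by omega
  have hv0m : G.dist v0 m + 1 = G.dist v0 x := by
    rw [dcomm G m x] at hm3
    omega
  have hmu2 : G.dist m u = 2 := by
    have hne : m ≠ u := by
      intro he
      rw [he] at hv0m
      omega
    have hnadj : ¬ G.Adj m u := by
      intro h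
      have := adj_cases hG h v0
      omega
    have hle : G.dist m u ≤ 2 := by
      have t1 : G.dist m u ≤ G.dist m x + G.dist x u := (conn hG).dist_triangle
      rw [dcomm G m x, hxm1, dcomm G x u, dist_adj hG hx] at t1
      omega
    have h0 : G.dist m u ≠ 0 := fun h => hne (dist_zero hG h)
    have h1 : G.dist m u ≠ 1 := fun h => hnadj (dist_eq_one_iff_adj.1 h)
    omega
  have hmx1 : G.dist m x = 1 := by rw [dcomm G m x]; exact hxm1
  refine ⟨u, y, x, m, ⟨?_, down_edge_own hG hy⟩,
    ⟨down_edge_own hG hx, ?_⟩, ⟨?_, ?_⟩⟩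
  · exact down_side_other hG hx hy hdx hdy hxy
  · exact down_side_other hG hy hx hdy hdx (Ne.symm hxy)
  · have hedge : s(u, x) ∈ G.edgeSet := hx
    rw [cSide_iff_rep hG (eCls_mem_theta hx) (eCls_mem_self hedge), sSide_iff hG hx]
    rw [SimpleGraph.dist_self, dist_adj hG hx, hmu2, hmx1]
    intro hiff
    omega
  · have hedge : s(u, y) ∈ G.edgeSet := hy
    rw [cSide_iff_rep hG (eCls_mem_theta hy) (eCls_mem_self hedge), sSide_iff hG hy]
    rw [SimpleGraph.dist_self, dist_adj hG hy, hmu2, hmy1]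
    intro hiff
    omega

lemma dcls_inj_aux (hG : IsMedianGraph G) {v0 u v m : V}
    (hm1 : m ∈ interval G u v) (hm3 : m ∈ interval G v0 u) (hne : m ≠ u)
    (hdq : dcls G v0 u = dcls G v0 v) : False := by
  rw [mem_interval] at hm3
  have hum : 0 < G.dist u m := by
    have h0 : G.dist u m ≠ 0 := fun h => hne (dist_zero hG h).symm
    omega
  obtain ⟨x, hux, hxm⟩ := exists_closer hG hum
  have hxdown : G.dist v0 x + 1 = G.dist v0 u := by
    have t1 : G.dist v0 x ≤ G.dist v0 m + G.dist m x := (conn hG).dist_triangle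
    have t2 : G.dist v0 u ≤ G.dist v0 x + G.dist x u := (conn hG).dist_triangle
    rw [dcomm G x u, dist_adj hG hux] at t2
    rw [dcomm G m x] at t1
    rw [dcomm G m u] at hm3
    omega
  have hCd : eCls G s(u, x) ∈ dcls G v0 v := by
    rw [← hdq]
    exact ⟨x, hux, hxdown, rfl⟩
  obtain ⟨y, hvy, hydown, hCe⟩ := hCd
  set C := eCls G s(u, x) with hCdef
  have hCt : C ∈ thetaClasses G := eCls_mem_theta hux
  have hnux : ¬ cSide G C u x := down_edge_own hG hux
  have hv0x : cSide G C v0 x := down_edge_base hG hux hxdown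
  have hnvy : ¬ cSide G C v y := by
    rw [hCe]
    exact down_edge_own hG hvy
  have hv0y : cSide G C v0 y := by
    rw [hCe]
    exact down_edge_base hG hvy hydown
  have hnv0u : ¬ cSide G C v0 u := by
    intro h
    apply hnux
    rw [cSide_parity hG hCt u v0 x]
    exact ⟨fun _ => hv0x, fun _ => cSide_symm hG hCt h⟩
  have hnv0v : ¬ cSide G C v0 v := by
    intro h
    apply hnvy
    rw [cSide_parity hG hCt v v0 y]
    exact ⟨fun _ => hv0y, fun _ => cSide_symm hG hCt h⟩
  have huv : cSide G C u v := by
    rw [cSide_parity hG hCt u v0 v]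
    exact iff_of_false (fun h => hnv0u (cSide_symm hG hCt h)) hnv0v
  have hum' := (cSide_between hG hCt hm1 huv).1
  have hmxv0 : m ∈ interval G x v0 := by
    rw [mem_interval]
    have c1 : G.dist x m = G.dist m x := dcomm G x m
    have c2 : G.dist m v0 = G.dist v0 m := dcomm G m v0
    have c3 : G.dist x v0 = G.dist v0 x := dcomm G x v0
    have c4 : G.dist m u = G.dist u m := dcomm G m u
    omega
  have hxm' := (cSide_between hG hCt hmxv0 (cSide_symm hG hCt hv0x)).1
  have hv0m : cSide G C v0 m := by
    rw [cSide_parity hG hCt v0 x m]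
    exact ⟨fun _ => hxm', fun _ => hv0x⟩
  apply hnv0u
  rw [cSide_parity hG hCt v0 m u]
  refine ⟨fun _ => cSide_symm hG hCt ?_, fun _ => hv0m⟩
  exact hum'

lemma dcls_inj (hG : IsMedianGraph G) (v0 : V) {u v : V}
    (h : dcls G v0 u = dcls G v0 v) : u = v := by
  obtain ⟨m, ⟨hm1, hm2, hm3⟩, _⟩ := hG.2 u v v0
  have hmu : m = u := by
    by_contra hne
    exact dcls_inj_aux hG hm1 hm3 hne h
  have hmv : m = v := by
    by_contra hne
    have hm1' : m ∈ interval G v u := interval_comm.1 hm1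
    have hm3' : m ∈ interval G v0 v := by
      rw [mem_interval] at hm2 ⊢
      rw [dcomm G v m, dcomm G m v0, dcomm G v v0] at hm2
      omega
    exact dcls_inj_aux hG hm1' hm3' hne h.symm
  rw [← hmu, hmv]


section Zykov

variable {W : Type*} [Fintype W] [DecidableEq W]

/-- The set of cliques (as finsets) of a graph. -/
def cliqs (H : SimpleGraph W) : Set (Finset W) := {s : Finset W | H.IsClique (s : Set W)}

lemma ncard_split {α : Type*} [Finite α] (S : Set α) (p : α → Prop) :
    S.ncard = {x ∈ S | p x}.ncard + {x ∈ S | ¬ p x}.ncard := by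
  rw [← Set.ncard_union_eq ?_ (Set.toFinite _) (Set.toFinite _)]
  · congr 1
    ext x
    simp only [Set.mem_setOf_eq, Set.mem_union]
    tauto
  · rw [Set.disjoint_left]
    rintro x ⟨_, hx⟩ ⟨_, hnx⟩
    exact hnx hx

lemma ncard_bij {α β : Type*} {A : Set α} {B : Set β} (F : α → β)
    (hmaps : ∀ t ∈ A, F t ∈ B) (hinj : Set.InjOn F A)
    (hsurj : ∀ b ∈ B, ∃ a ∈ A, F a = b) : A.ncard = B.ncard := by
  rw [← Set.ncard_image_of_injOn hinj]
  congr 1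
  apply Set.eq_of_subset_of_subset
  · rintro b ⟨a, ha, rfl⟩
    exact hmaps a ha
  · intro b hb
    obtain ⟨a, ha, rfl⟩ := hsurj b hb
    exact ⟨a, ha, rfl⟩

lemma clique_card_le {H : SimpleGraph W} {d : ℕ} (hfree : H.CliqueFree (d + 1))
    {t : Finset W} (ht : H.IsClique (t : Set W)) : t.card ≤ d := by
  by_contra h
  push_neg at h
  obtain ⟨t', ht'sub, ht'card⟩ := Finset.exists_subset_card_eq (s := t) (n := d + 1) (by omega)
  exact hfree t' ⟨ht.subset (Finset.coe_subset.2 ht'sub), ht'card⟩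

/-- Removing a vertex: cliques split into those avoiding `p` and those containing `p`. -/
lemma L_rem (H : SimpleGraph W) (s : Finset W) (p : W) (hp : p ∈ s) (F : Finset W)
    (hF : ∀ z, z ∈ F ↔ z ∈ s ∧ H.Adj p z) :
    Set.ncard {t : Finset W | t ⊆ s ∧ H.IsClique (t : Set W)}
      = Set.ncard {t : Finset W | t ⊆ s.erase p ∧ H.IsClique (t : Set W)}
        + Set.ncard {t : Finset W | t ⊆ F ∧ H.IsClique (t : Set W)} := by
  rw [ncard_split {t : Finset W | t ⊆ s ∧ H.IsClique (t : Set W)} (fun t => p ∉ t)]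
  congr 1
  · congr 1
    ext t
    simp only [Set.mem_setOf_eq, Finset.subset_erase]
    tauto
  · refine ncard_bij (fun t => t.erase p) ?_ ?_ ?_
    · rintro t ⟨⟨hts, hcl⟩, hpt⟩
      simp only [Set.mem_setOf_eq, not_not] at hpt ⊢
      refine ⟨?_, hcl.subset (Finset.coe_subset.2 (Finset.erase_subset p t))⟩
      intro z hz
      rw [Finset.mem_erase] at hz
      rw [hF z]
      exact ⟨hts hz.2, hcl (by simpa using hpt) (by simpa using hz.2) (Ne.symm hz.1)⟩
    · rintro t1 ⟨_, hp1⟩ t2 ⟨_, hp2⟩ hEq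
      simp only [Set.mem_setOf_eq, not_not] at hp1 hp2
      rw [← Finset.insert_erase hp1, ← Finset.insert_erase hp2]
      exact congrArg (insert p) hEq
    · rintro t' ⟨ht's, ht'cl⟩
      have hpt' : p ∉ t' := by
        intro h
        exact H.irrefl ((hF p).1 (ht's h)).2
      refine ⟨insert p t', ⟨⟨?_, ?_⟩, ?_⟩, ?_⟩
      · intro z hz
        rw [Finset.mem_insert] at hz
        rcases hz with rfl | hz
        · exact hp
        · exact ((hF z).1 (ht's hz)).1
      · rw [Finset.coe_insert]
        refine ht'cl.insert ?_
        intro b hb _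
        exact ((hF b).1 (ht's hb)).2
      · simp only [Set.mem_setOf_eq, not_not]
        exact Finset.mem_insert_self p t'
      · exact Finset.erase_insert hpt'

/-- Product formula: attaching a set `Q` of pairwise non-adjacent vertices, each adjacent
to everything in `s'`. -/
lemma cc_union (H : SimpleGraph W) (s' : Finset W) :
    ∀ Q : Finset W, (∀ q ∈ Q, q ∉ s') → (∀ q ∈ Q, ∀ z ∈ s', H.Adj q z) →
    (∀ q ∈ Q, ∀ q' ∈ Q, q ≠ q' → ¬ H.Adj q q') →
    Set.ncard {t : Finset W | t ⊆ s' ∪ Q ∧ H.IsClique (t : Set W)}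
      = Set.ncard {t : Finset W | t ⊆ s' ∧ H.IsClique (t : Set W)} * (1 + Q.card) := by
  intro Q
  induction Q using Finset.induction_on with
  | empty =>
    intro _ _ _
    simp
  | @insert p Q hpQ IH =>
    intro hdisj hadj hnadj
    have hins : s' ∪ insert p Q = insert p (s' ∪ Q) := by
      ext z
      simp only [Finset.mem_union, Finset.mem_insert]
      tauto
    rw [hins]
    have hF : ∀ z, z ∈ s' ↔ z ∈ insert p (s' ∪ Q) ∧ H.Adj p z := by
      intro z
      constructor
      · intro hz
        exact ⟨Finset.mem_insert_of_mem (Finset.mem_union_left _ hz),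
          hadj p (Finset.mem_insert_self _ _) z hz⟩
      · rintro ⟨hz, hadjz⟩
        rw [Finset.mem_insert, Finset.mem_union] at hz
        rcases hz with rfl | hz | hz
        · exact absurd hadjz H.irrefl
        · exact hz
        · exact absurd hadjz (hnadj p (Finset.mem_insert_self _ _) z
            (Finset.mem_insert_of_mem hz) (fun hEq => hpQ (hEq ▸ hz)))
    rw [L_rem H _ p (Finset.mem_insert_self _ _) s' hF]
    have he1 : (insert p (s' ∪ Q)).erase p = s' ∪ Q := by
      rw [Finset.erase_insert]
      simp only [Finset.mem_union]
      rintro (h | h)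
      · exact hdisj p (Finset.mem_insert_self _ _) h
      · exact hpQ h
    rw [he1]
    rw [IH (fun q hq => hdisj q (Finset.mem_insert_of_mem hq))
      (fun q hq => hadj q (Finset.mem_insert_of_mem hq))
      (fun q hq q' hq' => hnadj q (Finset.mem_insert_of_mem hq) q'
        (Finset.mem_insert_of_mem hq'))]
    rw [Finset.card_insert_of_notMem hpQ]
    ring

lemma amgm (d : ℕ) (hd : 1 ≤ d) (a b : ℝ) (ha : 0 ≤ a) (hb : 0 ≤ b) :
    a * b ^ (d - 1) ≤ ((a + ((d : ℝ) - 1) * b) / d) ^ d := by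
  have hd0 : (0 : ℝ) < d := by
    have : (1 : ℝ) ≤ d := by exact_mod_cast hd
    linarith
  set w1 : ℝ := 1 / d with hw1
  set w2 : ℝ := ((d : ℝ) - 1) / d with hw2
  have hw1p : 0 ≤ w1 := by positivity
  have hw2p : 0 ≤ w2 := by
    rw [hw2]
    apply div_nonneg _ (le_of_lt hd0)
    have : (1 : ℝ) ≤ d := by exact_mod_cast hd
    linarith
  have hw : w1 + w2 = 1 := by
    rw [hw1, hw2]
    field_simp
    ring
  have h := Real.geom_mean_le_arith_mean2_weighted hw1p hw2p ha hb hw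
  have hR : w1 * a + w2 * b = (a + ((d : ℝ) - 1) * b) / d := by
    rw [hw1, hw2]
    field_simp
  rw [hR] at h
  have hpow := pow_le_pow_left₀ (by positivity) h d
  have hL : (a ^ w1 * b ^ w2) ^ d = a * b ^ (d - 1) := by
    rw [mul_pow, ← Real.rpow_natCast (a ^ w1) d, ← Real.rpow_natCast (b ^ w2) d,
      ← Real.rpow_mul ha, ← Real.rpow_mul hb]
    have e1 : w1 * d = 1 := by rw [hw1]; field_simp
    have e2 : w2 * d = ((d - 1 : ℕ) : ℝ) := by
      rw [hw2, Nat.cast_sub hd]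
      field_simp
      norm_num
    rw [e1, e2, Real.rpow_one, Real.rpow_natCast]
  rw [hL] at hpow
  exact hpow

lemma zykov_in (H : SimpleGraph W)
    (htr : ∀ a b c : W, ¬ H.Adj a b → ¬ H.Adj b c → ¬ H.Adj a c) :
    ∀ (N : ℕ) (s : Finset W), s.card = N → ∀ (d : ℕ), 1 ≤ d →
    (∀ t : Finset W, t ⊆ s → H.IsClique (t : Set W) → t.card ≤ d) →
    (Set.ncard {t : Finset W | t ⊆ s ∧ H.IsClique (t : Set W)} : ℝ)
      ≤ (((d : ℝ) + s.card) / d) ^ d := by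
  intro N
  induction N using Nat.strong_induction_on with
  | _ N IHN =>
    intro s hsN d hd hfree
    classical
    have hd0 : (0 : ℝ) < d := by
      have : (1 : ℝ) ≤ d := by exact_mod_cast hd
      linarith
    rcases Finset.eq_empty_or_nonempty s with rfl | ⟨v, hv⟩
    · have hset : {t : Finset W | t ⊆ (∅ : Finset W) ∧ H.IsClique (t : Set W)}
          = {(∅ : Finset W)} := by
        ext t
        simp only [Set.mem_setOf_eq, Finset.subset_empty, Set.mem_singleton_iff]
        constructor
        · rintro ⟨rfl, _⟩
          rfl
        · rintro rfl
          exact ⟨rfl, by simp⟩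
      rw [hset, Set.ncard_singleton]
      have he : (((d : ℝ) + (∅ : Finset W).card) / d) ^ d = 1 := by
        simp only [Finset.card_empty, Nat.cast_zero, add_zero]
        rw [div_self (ne_of_gt hd0), one_pow]
      rw [he]
      norm_num
    · set P := s.filter (fun z => ¬ H.Adj v z) with hPdef
      have hvP : v ∈ P := by
        rw [hPdef, Finset.mem_filter]
        exact ⟨hv, H.irrefl⟩
      set s' := s \ P with hs'def
      have hs'adj : ∀ z ∈ s', H.Adj v z := by
        intro z hz
        rw [hs'def, Finset.mem_sdiff] at hz
        obtain ⟨hzs, hzP⟩ := hz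
        by_contra h
        exact hzP (by rw [hPdef, Finset.mem_filter]; exact ⟨hzs, h⟩)
      have hPadj : ∀ p ∈ P, ∀ z ∈ s', H.Adj p z := by
        intro p hpP z hz
        rcases eq_or_ne p v with rfl | hne
        · exact hs'adj z hz
        · by_contra h
          have h1 : ¬ H.Adj v p := (Finset.mem_filter.1 hpP).2
          exact absurd (hs'adj z hz) (htr v p z h1 h)
      have hPnadj : ∀ p ∈ P, ∀ p' ∈ P, p ≠ p' → ¬ H.Adj p p' := by
        intro p hp p' hp' hne
        rcases eq_or_ne p v with rfl | hnv
        · exact (Finset.mem_filter.1 hp').2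
        · have h1 : ¬ H.Adj p v := fun hh => (Finset.mem_filter.1 hp).2 hh.symm
          rcases eq_or_ne p' v with rfl | hnv'
          · exact h1
          · exact htr p v p' h1 (Finset.mem_filter.1 hp').2
      have hdisj : ∀ q ∈ P, q ∉ s' := by
        intro q hq
        rw [hs'def, Finset.mem_sdiff]
        tauto
      have hPs : P ⊆ s := by
        rw [hPdef]
        exact Finset.filter_subset _ _
      have hunion : s' ∪ P = s := by
        ext z
        rw [Finset.mem_union, hs'def, Finset.mem_sdiff]
        constructor
        · rintro (⟨h, _⟩ | h)
          · exact h
          · exact hPs h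
        · intro hz
          by_cases hzP : z ∈ P
          · exact Or.inr hzP
          · exact Or.inl ⟨hz, hzP⟩
      have hcount : Set.ncard {t : Finset W | t ⊆ s ∧ H.IsClique (t : Set W)}
          = Set.ncard {t : Finset W | t ⊆ s' ∧ H.IsClique (t : Set W)} * (1 + P.card) := by
        conv_lhs => rw [← hunion]
        exact cc_union H s' P hdisj hPadj hPnadj
      have hcards : s'.card + P.card = s.card := by
        rw [← hunion]
        rw [Finset.card_union_of_disjoint]
        rw [Finset.disjoint_left]
        intro a ha
        exact fun hP => hdisj a hP ha
      rcases eq_or_lt_of_le hd with hd1 | hd2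
      · -- d = 1 : no edges inside s
        have hs'e : s' = ∅ := by
          rw [Finset.eq_empty_iff_forall_notMem]
          intro z hz
          have hvz : v ≠ z := fun h => hdisj v hvP (h ▸ hz)
          have hzs : z ∈ s := by
            rw [hs'def, Finset.mem_sdiff] at hz
            exact hz.1
          have hcl : H.IsClique ({v, z} : Finset W) := by
            rw [Finset.coe_pair]
            exact SimpleGraph.isClique_pair.2 (fun _ => hs'adj z hz)
          have hsub : ({v, z} : Finset W) ⊆ s := by
            intro a ha
            rw [Finset.mem_insert, Finset.mem_singleton] at ha
            rcases ha with rfl | rfl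
            · exact hv
            · exact hzs
          have := hfree _ hsub hcl
          rw [Finset.card_pair hvz] at this
          omega
        have hPcard : P.card = s.card := by
          rw [hs'e] at hcards
          simpa using hcards
        rw [hcount, hs'e]
        have hone : {t : Finset W | t ⊆ (∅ : Finset W) ∧ H.IsClique (t : Set W)}
            = {(∅ : Finset W)} := by
          ext t
          simp only [Set.mem_setOf_eq, Finset.subset_empty, Set.mem_singleton_iff]
          constructor
          · rintro ⟨rfl, _⟩
            rfl
          · rintro rfl
            exact ⟨rfl, by simp⟩
        rw [hone, Set.ncard_singleton, one_mul, hPcard, ← hd1]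
        push_cast
        norm_num
      · -- d ≥ 2
        have hPpos : 1 ≤ P.card := Finset.card_pos.2 ⟨v, hvP⟩
        have hcard' : s'.card < N := by omega
        have hfree' : ∀ t : Finset W, t ⊆ s' → H.IsClique (t : Set W) → t.card ≤ d - 1 := by
          intro t hts hcl
          by_contra hcon
          push_neg at hcon
          have hvt : v ∉ t := fun h => hdisj v hvP (hts h)
          have hcl' : H.IsClique ((insert v t : Finset W) : Set W) := by
            rw [Finset.coe_insert]
            refine hcl.insert ?_
            intro b hb _
            exact hs'adj b (hts hb)
          have hsub : insert v t ⊆ s := by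
            intro a ha
            rw [Finset.mem_insert] at ha
            rcases ha with rfl | ha
            · exact hv
            · exact (Finset.sdiff_subset) (hts ha)
          have := hfree _ hsub hcl'
          rw [Finset.card_insert_of_notMem hvt] at this
          omega
        have IH' := IHN s'.card hcard' s' rfl (d - 1) (by omega) hfree'
        rw [hcount]
        push_cast
        have hb0 : (0 : ℝ) ≤ (((d - 1 : ℕ) : ℝ) + s'.card) / ((d - 1 : ℕ) : ℝ) := by
          apply div_nonneg <;> positivity
        have hkey := amgm d hd ((1 : ℝ) + P.card)
          ((((d - 1 : ℕ) : ℝ) + s'.card) / ((d - 1 : ℕ) : ℝ)) (by positivity) hb0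
        have hstep : (Set.ncard {t : Finset W | t ⊆ s' ∧ H.IsClique (t : Set W)} : ℝ)
            * ((1 : ℝ) + P.card)
            ≤ ((((d - 1 : ℕ) : ℝ) + s'.card) / ((d - 1 : ℕ) : ℝ)) ^ (d - 1)
              * ((1 : ℝ) + P.card) := by
          apply mul_le_mul_of_nonneg_right IH' (add_nonneg zero_le_one (Nat.cast_nonneg _))
        have hd1R : ((d - 1 : ℕ) : ℝ) = (d : ℝ) - 1 := by
          rw [Nat.cast_sub hd]
          norm_num
        have hfinal : ((((d - 1 : ℕ) : ℝ) + s'.card) / ((d - 1 : ℕ) : ℝ)) ^ (d - 1)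
            * ((1 : ℝ) + P.card) ≤ (((d : ℝ) + s.card) / d) ^ d := by
          rw [mul_comm]
          refine le_trans hkey ?_
          have hdm1 : (d : ℝ) - 1 ≠ 0 := by
            have h2d : (2 : ℝ) ≤ d := by exact_mod_cast hd2
            linarith
          have harg : ((1 : ℝ) + P.card
              + ((d : ℝ) - 1) * ((((d - 1 : ℕ) : ℝ) + s'.card) / ((d - 1 : ℕ) : ℝ)))
              = (d : ℝ) + s.card := by
            rw [hd1R, mul_comm ((d : ℝ) - 1) _, div_mul_cancel₀ _ hdm1]
            have hsum : (s'.card : ℝ) + P.card = s.card := by exact_mod_cast hcards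
            linarith
          rw [harg]
        calc (Set.ncard {t : Finset W | t ⊆ s' ∧ H.IsClique (t : Set W)} : ℝ)
            * ((1 : ℝ) + P.card)
            ≤ ((((d - 1 : ℕ) : ℝ) + s'.card) / ((d - 1 : ℕ) : ℝ)) ^ (d - 1)
              * ((1 : ℝ) + P.card) := hstep
          _ ≤ (((d : ℝ) + s.card) / d) ^ d := hfinal


section Clone

variable {H' H : SimpleGraph W} {y b : W} {X : Set W}

lemma clone_maps (hyX : y ∈ X) (hbX : b ∉ X)
    (h1 : ∀ z, H'.Adj y z ↔ (z ∉ X ∧ H.Adj b z))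
    (h2 : ∀ z z', z ∉ X → z' ∉ X → (H'.Adj z z' ↔ H.Adj z z'))
    {t : Finset W} (hyt : y ∈ t) (hcl : H'.IsClique (t : Set W)) :
    H.IsClique ((insert b (t.erase y) : Finset W) : Set W) ∧ b ∉ t ∧
      (∀ z ∈ t.erase y, z ∉ X) ∧ (insert b (t.erase y)).card = t.card := by
  have hmemX : ∀ z ∈ t.erase y, z ∉ X ∧ H.Adj b z := by
    intro z hz
    rw [Finset.mem_erase] at hz
    have := hcl (by simpa using hyt) (by simpa using hz.2) (Ne.symm hz.1)
    rw [h1 z] at this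
    exact this
  have hbt : b ∉ t := by
    intro hbt
    have hby : b ≠ y := fun h => hbX (h ▸ hyX)
    have := hcl (by simpa using hyt) (by simpa using hbt) (Ne.symm hby)
    rw [h1 b] at this
    exact H.irrefl this.2
  refine ⟨?_, hbt, fun z hz => (hmemX z hz).1, ?_⟩
  · rw [Finset.coe_insert]
    refine SimpleGraph.IsClique.insert ?_ ?_
    · intro z hz z' hz' hne
      rw [Finset.mem_coe] at hz hz'
      rw [← h2 z z' (hmemX z hz).1 (hmemX z' hz').1]
      apply hcl _ _ hne <;> rw [Finset.mem_coe] at * <;>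
        [exact Finset.mem_coe.2 (Finset.erase_subset _ _ hz);
         exact Finset.mem_coe.2 (Finset.erase_subset _ _ hz')]
    · intro z hz _
      rw [Finset.mem_coe] at hz
      exact ((hmemX z hz).2).symm.symm
  · rw [Finset.card_insert_of_notMem (fun h => hbt (Finset.erase_subset _ _ h)),
      Finset.card_erase_of_mem hyt]
    have : 1 ≤ t.card := Finset.card_pos.2 ⟨y, hyt⟩
    omega

lemma clone_count (hyb : y ≠ b) (hyX : y ∈ X) (hbX : b ∉ X)
    (hnadjX : ∀ z ∈ X, ¬ H.Adj b z)
    (h1 : ∀ z, H'.Adj y z ↔ (z ∉ X ∧ H.Adj b z))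
    (h2 : ∀ z z', z ∉ X → z' ∉ X → (H'.Adj z z' ↔ H.Adj z z')) :
    Set.ncard {t : Finset W | t ∈ cliqs H' ∧ y ∈ t}
      = Set.ncard {t : Finset W | t ∈ cliqs H ∧ b ∈ t} := by
  classical
  have htX : ∀ t : Finset W, t ∈ cliqs H → b ∈ t → ∀ z ∈ t, z ∉ X := by
    intro t hcl hbt z hz hzX
    rcases eq_or_ne z b with rfl | hne
    · exact hbX hzX
    · exact hnadjX z hzX (hcl (by simpa using hbt) (by simpa using hz) (Ne.symm hne))
  refine ncard_bij (fun t => insert b (t.erase y)) ?_ ?_ ?_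
  · rintro t ⟨hcl, hyt⟩
    obtain ⟨hcl', _, _, _⟩ := clone_maps hyX hbX h1 h2 hyt hcl
    exact ⟨hcl', Finset.mem_insert_self _ _⟩
  · rintro t1 ⟨hcl1, hy1⟩ t2 ⟨hcl2, hy2⟩ hEq
    obtain ⟨_, hb1, _, _⟩ := clone_maps hyX hbX h1 h2 hy1 hcl1
    obtain ⟨_, hb2, _, _⟩ := clone_maps hyX hbX h1 h2 hy2 hcl2
    have hrec : ∀ t : Finset W, y ∈ t → b ∉ t →
        insert y ((insert b (t.erase y)).erase b) = t := by
      intro t hyt hbt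
      rw [Finset.erase_insert (fun h => hbt (Finset.erase_subset _ _ h)),
        Finset.insert_erase hyt]
    rw [← hrec t1 hy1 hb1, ← hrec t2 hy2 hb2]
    simp only at hEq
    rw [hEq]
  · rintro t' ⟨hcl', hbt'⟩
    have hallX : ∀ z ∈ t', z ∉ X := htX t' hcl' hbt'
    have hyt' : y ∉ t' := fun h => hallX y h hyX
    refine ⟨insert y (t'.erase b), ⟨?_, Finset.mem_insert_self _ _⟩, ?_⟩
    · rw [cliqs, Set.mem_setOf_eq, Finset.coe_insert]
      refine SimpleGraph.IsClique.insert ?_ ?_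
      · intro z hz z' hz' hne
        rw [Finset.mem_coe] at hz hz'
        rw [h2 z z' (hallX z (Finset.erase_subset _ _ hz))
          (hallX z' (Finset.erase_subset _ _ hz'))]
        exact hcl' (by simpa using Finset.erase_subset _ _ hz)
          (by simpa using Finset.erase_subset _ _ hz') hne
      · intro z hz _
        rw [Finset.mem_coe, Finset.mem_erase] at hz
        rw [h1 z]
        exact ⟨hallX z hz.2, hcl' (by simpa using hbt') (by simpa using hz.2)
          (Ne.symm hz.1)⟩
    · show insert b ((insert y (t'.erase b)).erase y) = t'
      rw [Finset.erase_insert (fun h => hyt' (Finset.erase_subset _ _ h)),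
        Finset.insert_erase hbt']

lemma clone_free {d : ℕ} (hyX : y ∈ X) (hbX : b ∉ X)
    (h1 : ∀ z, H'.Adj y z ↔ (z ∉ X ∧ H.Adj b z))
    (h2 : ∀ z z', z ∉ X → z' ∉ X → (H'.Adj z z' ↔ H.Adj z z'))
    (hfree : H.CliqueFree (d + 1)) {t : Finset W} (hyt : y ∈ t)
    (hcl : H'.IsClique (t : Set W)) : t.card ≤ d := by
  classical
  obtain ⟨hcl', _, _, hcard⟩ := clone_maps hyX hbX h1 h2 hyt hcl
  rw [← hcard]
  exact clique_card_le hfree hcl'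

lemma avoid_clique (h2 : ∀ z z', z ∉ X → z' ∉ X → (H'.Adj z z' ↔ H.Adj z z'))
    {t : Finset W} (ht : ∀ z ∈ t, z ∉ X) :
    (H'.IsClique (t : Set W) ↔ H.IsClique (t : Set W)) := by
  constructor <;> intro h <;> intro z hz z' hz' hne
  · rw [← h2 z z' (ht z (Finset.mem_coe.1 hz)) (ht z' (Finset.mem_coe.1 hz'))]
    exact h hz hz' hne
  · rw [h2 z z' (ht z (Finset.mem_coe.1 hz)) (ht z' (Finset.mem_coe.1 hz'))]
    exact h hz hz' hne

end Clone

/-- Single-vertex surgery: replacing `u` by a twin of `w`. -/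
lemma surgery (H : SimpleGraph W) {u w : W} (hne : u ≠ w) (hnadj : ¬ H.Adj u w) (d : ℕ)
    (hfree : H.CliqueFree (d + 1)) :
    ∃ H' : SimpleGraph W, H'.CliqueFree (d + 1) ∧
      (cliqs H').ncard + Set.ncard {t : Finset W | t ∈ cliqs H ∧ u ∈ t}
        = (cliqs H).ncard + Set.ncard {t : Finset W | t ∈ cliqs H ∧ w ∈ t} := by
  classical
  set H' := SimpleGraph.fromRel
    (fun p q => (p ≠ u ∧ q ≠ u ∧ H.Adj p q) ∨ (p = u ∧ H.Adj w q)) with hH'def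
  have hwu : ¬ H.Adj w u := fun h => hnadj h.symm
  have h1 : ∀ z, H'.Adj u z ↔ (z ∉ ({u} : Set W) ∧ H.Adj w z) := by
    intro z
    rw [hH'def, SimpleGraph.fromRel_adj]
    constructor
    · rintro ⟨hne', (⟨h, _, _⟩ | ⟨_, h⟩) | (⟨_, h, _⟩ | ⟨h, hadj⟩)⟩
      · exact absurd rfl h
      · exact ⟨fun hm => hne' (Set.mem_singleton_iff.1 hm).symm, h⟩
      · exact absurd rfl h
      · exact absurd (h ▸ hadj) hwu
    · rintro ⟨hzu, hadj⟩
      refine ⟨fun hEq => hzu ?_, Or.inl (Or.inr ⟨rfl, hadj⟩)⟩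
      rw [← hEq]
      exact Set.mem_singleton u
  have h2 : ∀ z z', z ∉ ({u} : Set W) → z' ∉ ({u} : Set W) → (H'.Adj z z' ↔ H.Adj z z') := by
    intro z z' hz hz'
    rw [Set.mem_singleton_iff] at hz hz'
    rw [hH'def, SimpleGraph.fromRel_adj]
    constructor
    · rintro ⟨hne', (⟨_, _, h⟩ | ⟨h, _⟩) | (⟨_, _, h⟩ | ⟨h, _⟩)⟩
      · exact h
      · exact absurd h hz
      · exact h.symm
      · exact absurd h hz'
    · intro h
      exact ⟨h.ne, Or.inl (Or.inl ⟨hz, hz', h⟩)⟩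
  have hcfree : H'.CliqueFree (d + 1) := by
    rintro t ⟨hcl, hcard⟩
    by_cases hut : u ∈ t
    · have := clone_free (Set.mem_singleton u) (fun h => hne (Set.mem_singleton_iff.1 h).symm)
        h1 h2 hfree hut hcl
      omega
    · have hcl' : H.IsClique (t : Set W) := by
        exact (avoid_clique h2 (fun z hz h => hut ((Set.mem_singleton_iff.1 h) ▸ hz))).1 hcl
      have := clique_card_le hfree hcl'
      omega
  refine ⟨H', hcfree, ?_⟩
  have hsplit' : (cliqs H').ncard = Set.ncard {t : Finset W | t ∈ cliqs H' ∧ u ∈ t}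
      + Set.ncard {t : Finset W | t ∈ cliqs H' ∧ u ∉ t} :=
    ncard_split (cliqs H') (fun t => u ∈ t)
  have hsplit : (cliqs H).ncard = Set.ncard {t : Finset W | t ∈ cliqs H ∧ u ∈ t}
      + Set.ncard {t : Finset W | t ∈ cliqs H ∧ u ∉ t} :=
    ncard_split (cliqs H) (fun t => u ∈ t)
  have havoid : {t : Finset W | t ∈ cliqs H' ∧ u ∉ t}
      = {t : Finset W | t ∈ cliqs H ∧ u ∉ t} := by
    ext t
    simp only [Set.mem_setOf_eq]
    constructor <;> rintro ⟨hcl, hut⟩ <;>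
      refine ⟨?_, hut⟩
    · exact (avoid_clique h2 (fun z hz h => hut ((Set.mem_singleton_iff.1 h) ▸ hz))).1 hcl
    · exact (avoid_clique h2 (fun z hz h => hut ((Set.mem_singleton_iff.1 h) ▸ hz))).2 hcl
  have hclone : Set.ncard {t : Finset W | t ∈ cliqs H' ∧ u ∈ t}
      = Set.ncard {t : Finset W | t ∈ cliqs H ∧ w ∈ t} :=
    clone_count hne (Set.mem_singleton u)
      (fun h => hne (Set.mem_singleton_iff.1 h).symm) ?_ h1 h2
  · rw [hsplit', hsplit, havoid, hclone]
    ring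
  · intro z hz
    rw [Set.mem_singleton_iff] at hz
    rw [hz]
    exact hwu

/-- Double surgery: replacing both ends of an edge `a c` by twins of `b`. -/
lemma double_surgery (H : SimpleGraph W) {a b c : W} (hab : ¬ H.Adj a b) (hbc : ¬ H.Adj b c)
    (hac : H.Adj a c) (d : ℕ) (hfree : H.CliqueFree (d + 1)) :
    ∃ H2 : SimpleGraph W, H2.CliqueFree (d + 1) ∧
      (cliqs H2).ncard + Set.ncard {t : Finset W | t ∈ cliqs H ∧ a ∈ t}
          + Set.ncard {t : Finset W | t ∈ cliqs H ∧ c ∈ t ∧ a ∉ t}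
        = (cliqs H).ncard + 2 * Set.ncard {t : Finset W | t ∈ cliqs H ∧ b ∈ t} := by
  classical
  have hba : ¬ H.Adj b a := fun h => hab h.symm
  have hcb : ¬ H.Adj c b := fun h => hbc h.symm
  have hac' : a ≠ c := hac.ne
  have hba' : b ≠ a := by rintro rfl; exact hbc hac
  have hbc' : b ≠ c := by rintro rfl; exact hab hac
  set X : Set W := {a, c} with hXdef
  have haX : a ∈ X := Or.inl rfl
  have hcX : c ∈ X := Or.inr rfl
  have hbX : b ∉ X := by
    rintro (h | h)
    · exact hba' h
    · exact hbc' h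
  have hnadjX : ∀ z ∈ X, ¬ H.Adj b z := by
    rintro z (rfl | rfl)
    · exact hba
    · exact hbc
  set H2 := SimpleGraph.fromRel (fun p q =>
    (p ≠ a ∧ p ≠ c ∧ q ≠ a ∧ q ≠ c ∧ H.Adj p q) ∨ ((p = a ∨ p = c) ∧ H.Adj b q))
    with hH2def
  have hmemX : ∀ z, z ∉ X ↔ (z ≠ a ∧ z ≠ c) := by
    intro z
    rw [hXdef]
    simp only [Set.mem_insert_iff, Set.mem_singleton_iff]
    tauto
  have h1a : ∀ z, H2.Adj a z ↔ (z ∉ X ∧ H.Adj b z) := by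
    intro z
    rw [hH2def, SimpleGraph.fromRel_adj, hmemX z]
    constructor
    · rintro ⟨hne', (⟨h, _⟩ | ⟨_, h⟩) | (⟨_, _, h, _⟩ | ⟨_, h⟩)⟩
      · exact absurd rfl h
      · refine ⟨⟨Ne.symm hne', fun hzc => hbc (hzc ▸ h)⟩, h⟩
      · exact absurd rfl h
      · exact absurd h hba
    · rintro ⟨⟨hza, _⟩, hadj⟩
      exact ⟨Ne.symm hza, Or.inl (Or.inr ⟨Or.inl rfl, hadj⟩)⟩
  have h1c : ∀ z, H2.Adj c z ↔ (z ∉ X ∧ H.Adj b z) := by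
    intro z
    rw [hH2def, SimpleGraph.fromRel_adj, hmemX z]
    constructor
    · rintro ⟨hne', (⟨_, h, _⟩ | ⟨_, h⟩) | (⟨_, _, _, h, _⟩ | ⟨_, h⟩)⟩
      · exact absurd rfl h
      · refine ⟨⟨fun hza => hab (hza ▸ h).symm, Ne.symm hne'⟩, h⟩
      · exact absurd rfl h
      · exact absurd h hbc
    · rintro ⟨⟨_, hzc⟩, hadj⟩
      exact ⟨Ne.symm hzc, Or.inl (Or.inr ⟨Or.inr rfl, hadj⟩)⟩
  have h2' : ∀ z z', z ∉ X → z' ∉ X → (H2.Adj z z' ↔ H.Adj z z') := by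
    intro z z' hz hz'
    rw [hmemX z] at hz
    rw [hmemX z'] at hz'
    rw [hH2def, SimpleGraph.fromRel_adj]
    constructor
    · rintro ⟨hne', (⟨_, _, _, _, h⟩ | ⟨hz0, _⟩) | (⟨_, _, _, _, h⟩ | ⟨hz0, _⟩)⟩
      · exact h
      · rcases hz0 with rfl | rfl
        · exact absurd rfl hz.1
        · exact absurd rfl hz.2
      · exact h.symm
      · rcases hz0 with rfl | rfl
        · exact absurd rfl hz'.1
        · exact absurd rfl hz'.2
    · intro h
      exact ⟨h.ne, Or.inl (Or.inl ⟨hz.1, hz.2, hz'.1, hz'.2, h⟩)⟩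
  have hnac2 : ¬ H2.Adj a c := by
    rw [h1a c]
    rintro ⟨h, _⟩
    exact h hcX
  have hfree2 : H2.CliqueFree (d + 1) := by
    rintro t ⟨hcl, hcard⟩
    by_cases hat : a ∈ t
    · have := clone_free haX hbX h1a h2' hfree hat hcl
      omega
    · by_cases hct : c ∈ t
      · have := clone_free hcX hbX h1c h2' hfree hct hcl
        omega
      · have hclH : H.IsClique (t : Set W) := by
          refine (avoid_clique h2' ?_).1 hcl
          intro z hz hzX
          rcases hzX with rfl | rfl
          · exact hat hz
          · exact hct hz
        have := clique_card_le hfree hclH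
        omega
  refine ⟨H2, hfree2, ?_⟩
  -- counting
  have hsplit2 : (cliqs H2).ncard = Set.ncard {t : Finset W | t ∈ cliqs H2 ∧ a ∈ t}
      + Set.ncard {t : Finset W | t ∈ cliqs H2 ∧ a ∉ t} := ncard_split _ _
  have hsplit2' : Set.ncard {t : Finset W | t ∈ cliqs H2 ∧ a ∉ t}
      = Set.ncard {t : Finset W | t ∈ cliqs H2 ∧ c ∈ t ∧ a ∉ t}
        + Set.ncard {t : Finset W | t ∈ cliqs H2 ∧ c ∉ t ∧ a ∉ t} := by
    rw [ncard_split {t : Finset W | t ∈ cliqs H2 ∧ a ∉ t} (fun t => c ∈ t)]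
    congr 1 <;> (congr 1; ext t; simp only [Set.mem_setOf_eq]; tauto)
  have hsplitH : (cliqs H).ncard = Set.ncard {t : Finset W | t ∈ cliqs H ∧ a ∈ t}
      + Set.ncard {t : Finset W | t ∈ cliqs H ∧ a ∉ t} := ncard_split _ _
  have hsplitH' : Set.ncard {t : Finset W | t ∈ cliqs H ∧ a ∉ t}
      = Set.ncard {t : Finset W | t ∈ cliqs H ∧ c ∈ t ∧ a ∉ t}
        + Set.ncard {t : Finset W | t ∈ cliqs H ∧ c ∉ t ∧ a ∉ t} := by
    rw [ncard_split {t : Finset W | t ∈ cliqs H ∧ a ∉ t} (fun t => c ∈ t)]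
    congr 1 <;> (congr 1; ext t; simp only [Set.mem_setOf_eq]; tauto)
  have hcla : Set.ncard {t : Finset W | t ∈ cliqs H2 ∧ a ∈ t}
      = Set.ncard {t : Finset W | t ∈ cliqs H ∧ b ∈ t} :=
    clone_count (Ne.symm hba') haX hbX hnadjX h1a h2'
  have hclc0 : {t : Finset W | t ∈ cliqs H2 ∧ c ∈ t ∧ a ∉ t}
      = {t : Finset W | t ∈ cliqs H2 ∧ c ∈ t} := by
    ext t
    simp only [Set.mem_setOf_eq]
    constructor
    · rintro ⟨h1, h2, _⟩
      exact ⟨h1, h2⟩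
    · rintro ⟨h1, h2⟩
      refine ⟨h1, h2, fun hat => ?_⟩
      exact hnac2 (h1 (by simpa using hat) (by simpa using h2) hac')
  have hclc : Set.ncard {t : Finset W | t ∈ cliqs H2 ∧ c ∈ t}
      = Set.ncard {t : Finset W | t ∈ cliqs H ∧ b ∈ t} :=
    clone_count (Ne.symm hbc') hcX hbX hnadjX h1c h2'
  have havoid : {t : Finset W | t ∈ cliqs H2 ∧ c ∉ t ∧ a ∉ t}
      = {t : Finset W | t ∈ cliqs H ∧ c ∉ t ∧ a ∉ t} := by
    ext t
    simp only [Set.mem_setOf_eq]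
    have hX : ∀ (hct : c ∉ t) (hat : a ∉ t), ∀ z ∈ t, z ∉ X := by
      rintro hct hat z hz (rfl | rfl)
      · exact hat hz
      · exact hct hz
    constructor
    · rintro ⟨hcl, hct, hat⟩
      exact ⟨(avoid_clique h2' (hX hct hat)).1 hcl, hct, hat⟩
    · rintro ⟨hcl, hct, hat⟩
      exact ⟨(avoid_clique h2' (hX hct hat)).2 hcl, hct, hat⟩
  rw [hsplit2, hsplit2', hsplitH, hsplitH', hcla, hclc0, hclc, havoid]
  ring

/-- The clique-count bound for `K_{d+1}`-free graphs. -/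
theorem zykov_bound (d : ℕ) (hd : 1 ≤ d) (H : SimpleGraph W) (hfree : H.CliqueFree (d + 1)) :
    ((cliqs H).ncard : ℝ) ≤ (((d : ℝ) + Fintype.card W) / d) ^ d := by
  classical
  have hfin : Finite (SimpleGraph W) :=
    Finite.of_injective (fun H' : SimpleGraph W => H'.edgeSet) SimpleGraph.edgeSet_injective
  have hne : Nonempty {H' : SimpleGraph W // H'.CliqueFree (d + 1)} :=
    ⟨⟨⊥, SimpleGraph.cliqueFree_bot (by omega)⟩⟩
  obtain ⟨Hm, hmax⟩ := Finite.exists_max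
    (fun H' : {H' : SimpleGraph W // H'.CliqueFree (d + 1)} => (cliqs H'.val).ncard)
  have hmfree : Hm.val.CliqueFree (d + 1) := Hm.prop
  have hHle : (cliqs H).ncard ≤ (cliqs Hm.val).ncard := hmax ⟨H, hfree⟩
  have hcnt : ∀ u w : W, u ≠ w → ¬ Hm.val.Adj u w →
      Set.ncard {t : Finset W | t ∈ cliqs Hm.val ∧ w ∈ t}
        ≤ Set.ncard {t : Finset W | t ∈ cliqs Hm.val ∧ u ∈ t} := by
    intro u w hne' hnadj
    obtain ⟨H', hfree', heq⟩ := surgery Hm.val hne' hnadj d hmfree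
    have hle := hmax ⟨H', hfree'⟩
    simp only at hle
    omega
  have htr : ∀ p q r : W, ¬ Hm.val.Adj p q → ¬ Hm.val.Adj q r → ¬ Hm.val.Adj p r := by
    intro p q r hpq hqr
    by_contra hpr
    have hpq' : p ≠ q := by rintro rfl; exact hqr hpr
    have hqr' : q ≠ r := by rintro rfl; exact hpq hpr
    obtain ⟨H2, hfree2, heq2⟩ := double_surgery Hm.val hpq hqr hpr d hmfree
    have hle2 := hmax ⟨H2, hfree2⟩
    simp only at hle2
    have e1 := hcnt p q hpq' hpq
    have e1' := hcnt q p hpq'.symm (fun h => hpq h.symm)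
    have e2 := hcnt r q hqr'.symm (fun h => hqr h.symm)
    have e2' := hcnt q r hqr' hqr
    have hsplitr : Set.ncard {t : Finset W | t ∈ cliqs Hm.val ∧ r ∈ t}
        = Set.ncard {t : Finset W | t ∈ cliqs Hm.val ∧ r ∈ t ∧ p ∈ t}
          + Set.ncard {t : Finset W | t ∈ cliqs Hm.val ∧ r ∈ t ∧ p ∉ t} := by
      rw [ncard_split {t : Finset W | t ∈ cliqs Hm.val ∧ r ∈ t} (fun t => p ∈ t)]
      congr 1 <;> (congr 1; ext t; simp only [Set.mem_setOf_eq]; tauto)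
    have hboth : 1 ≤ Set.ncard {t : Finset W | t ∈ cliqs Hm.val ∧ r ∈ t ∧ p ∈ t} := by
      have hmem : ({p, r} : Finset W) ∈
          {t : Finset W | t ∈ cliqs Hm.val ∧ r ∈ t ∧ p ∈ t} := by
        refine ⟨?_, ?_, ?_⟩
        · show Hm.val.IsClique (({p, r} : Finset W) : Set W)
          rw [Finset.coe_pair]
          exact SimpleGraph.isClique_pair.2 (fun _ => hpr)
        · simp
        · simp
      exact (Set.ncard_pos (Set.toFinite _)).2 ⟨({p, r} : Finset W), hmem⟩
    omega
  have huniv : cliqs Hm.val = {t : Finset W | t ⊆ Finset.univ ∧ Hm.val.IsClique (t : Set W)} := by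
    ext t
    simp only [cliqs, Set.mem_setOf_eq, Finset.subset_univ, true_and]
  have hzy := zykov_in Hm.val htr (Finset.univ : Finset W).card Finset.univ rfl d hd
    (fun t _ hcl => clique_card_le hmfree hcl)
  rw [← huniv, Finset.card_univ] at hzy
  calc ((cliqs H).ncard : ℝ) ≤ ((cliqs Hm.val).ncard : ℝ) := by exact_mod_cast hHle
    _ ≤ (((d : ℝ) + Fintype.card W) / d) ^ d := hzy


end Zykov

/-! ### Final assembly -/

variable (hG : IsMedianGraph G)

lemma cube_embeds (hG : IsMedianGraph G) {k : ℕ} (C : Fin k → Set (Sym2 V))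
    (hmem : ∀ i, C i ∈ thetaClasses G) (hcr : ∀ i j, i ≠ j → Crosses G (C i) (C j)) :
    Nonempty (cubeGraph k ↪g G) := by
  obtain ⟨φ, hφ⟩ := cube_family hG k C hmem hcr
  have hCinj : ∀ i j : Fin k, C i = C j → i = j := by
    intro i j h
    by_contra hij
    exact (crosses_ne (hcr i j hij)) h
  have hinj : Function.Injective φ := by
    intro σ τ hEq
    by_contra hne
    have hex : ∃ i, σ i ≠ τ i := by
      by_contra hcon
      push_neg at hcon
      exact hne (funext hcon)
    obtain ⟨i, hi⟩ := hex
    have hmem2 : C i ∈ sep G (φ σ) (φ τ) := by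
      rw [hφ]
      exact ⟨i, hi, rfl⟩
    rw [hEq, sep_self hG] at hmem2
    exact hmem2
  have hAdjIff : ∀ σ τ, (G.Adj (φ σ) (φ τ) ↔
      ∃ i, σ i ≠ τ i ∧ ∀ j, j ≠ i → σ j = τ j) := by
    intro σ τ
    rw [← dist_eq_one_iff_adj, ← sep_ncard hG, hφ]
    constructor
    · intro h1
      obtain ⟨D0, hD0⟩ := Set.ncard_eq_one.1 h1
      have hex : ∃ i, σ i ≠ τ i := by
        by_contra hcon
        push_neg at hcon
        have : {D : Set (Sym2 V) | ∃ i, σ i ≠ τ i ∧ D = C i} = ∅ := by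
          ext D
          simp only [Set.mem_setOf_eq, Set.mem_empty_iff_false, iff_false]
          rintro ⟨i, hi, _⟩
          exact hi (hcon i)
        rw [this] at hD0
        exact absurd hD0.symm (Set.singleton_ne_empty D0)
      obtain ⟨i, hi⟩ := hex
      refine ⟨i, hi, fun j hj => ?_⟩
      by_contra hj2
      have hCi : C i ∈ ({D0} : Set (Set (Sym2 V))) := by
        rw [← hD0]; exact ⟨i, hi, rfl⟩
      have hCj : C j ∈ ({D0} : Set (Set (Sym2 V))) := by
        rw [← hD0]; exact ⟨j, hj2, rfl⟩
      rw [Set.mem_singleton_iff] at hCi hCj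
      exact hj (hCinj j i (hCj.trans hCi.symm))
    · rintro ⟨i, hi, hall⟩
      have : {D : Set (Sym2 V) | ∃ j, σ j ≠ τ j ∧ D = C j} = {C i} := by
        ext D
        simp only [Set.mem_setOf_eq, Set.mem_singleton_iff]
        constructor
        · rintro ⟨j, hj, rfl⟩
          by_cases hji : j = i
          · rw [hji]
          · exact absurd (hall j hji) hj
        · rintro rfl
          exact ⟨i, hi, rfl⟩
      rw [this, Set.ncard_singleton]
  refine ⟨⟨⟨φ, hinj⟩, ?_⟩⟩
  intro σ τ
  simp only [Function.Embedding.coeFn_mk]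
  rw [hAdjIff σ τ]
  rw [cubeGraph, SimpleGraph.fromRel_adj]
  constructor
  · rintro ⟨i, hi, hall⟩
    refine ⟨fun hEq => hi (by rw [hEq]), Or.inl ⟨i, hi, hall⟩⟩
  · rintro ⟨hne, (⟨i, hi, hall⟩ | ⟨i, hi, hall⟩)⟩
    · exact ⟨i, hi, hall⟩
    · exact ⟨i, Ne.symm hi, fun j hj => (hall j hj).symm⟩

set_option maxHeartbeats 1000000 in
theorem main_bound {V : Type*} [Fintype V] (G : SimpleGraph V) (hG : IsMedianGraph G)
    (n q d : ℕ) (hd : 1 ≤ d)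
    (hn : Fintype.card V = n) (hq : (thetaClasses G).ncard = q)
    (hmax : ∀ k : ℕ, Nonempty (cubeGraph k ↪g G) → k ≤ d) :
    (n : ℝ) ≤ (((d : ℝ) + q) / d) ^ d := by
  classical
  have hfinSym : Finite (Sym2 V) := by
    exact Finite.of_surjective (fun p : V × V => s(p.1, p.2))
      (fun e => Sym2.ind (fun a b => ⟨(a, b), rfl⟩) e)
  letI : Fintype {C : Set (Sym2 V) // C ∈ thetaClasses G} := Fintype.ofFinite _
  letI : DecidableEq {C : Set (Sym2 V) // C ∈ thetaClasses G} := Classical.decEq _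
  set W := {C : Set (Sym2 V) // C ∈ thetaClasses G} with hWdef
  set Γ : SimpleGraph W :=
    { Adj := fun C C' => Crosses G C.val C'.val
      symm := ⟨fun C C' h => crosses_symm h⟩
      loopless := ⟨fun C h => (crosses_ne h) rfl⟩ } with hΓdef
  have hΓadj : ∀ C C' : W, Γ.Adj C C' ↔ Crosses G C.val C'.val := fun _ _ => Iff.rfl
  -- Γ is (d+1)-clique-free
  have hfreeΓ : Γ.CliqueFree (d + 1) := by
    rintro s ⟨hcl, hcard⟩
    have e := s.equivFin
    set g : Fin (d + 1) → W := fun i => (e.symm (Fin.cast hcard.symm i)).val with hgdef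
    have hgs : ∀ i, g i ∈ s := fun i => (e.symm (Fin.cast hcard.symm i)).prop
    have hginj : Function.Injective g := by
      intro i j h
      have := Subtype.ext (p := fun x => x ∈ s) h
      have h2 := e.symm.injective this
      exact Fin.cast_injective _ (by exact h2)
    set Cfam : Fin (d + 1) → Set (Sym2 V) := fun i => (g i).val with hCfamdef
    have hmemf : ∀ i, Cfam i ∈ thetaClasses G := fun i => (g i).prop
    have hcrf : ∀ i j, i ≠ j → Crosses G (Cfam i) (Cfam j) := by
      intro i j hij
      have hne : g i ≠ g j := fun h => hij (hginj h)
      exact hcl (hgs i) (hgs j) hne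
    have hcube := cube_embeds hG Cfam hmemf hcrf
    have := hmax (d + 1) hcube
    omega
  -- the injection from vertices to cliques of Γ
  obtain ⟨v0⟩ := (conn hG).nonempty
  set DnF : V → Finset W := fun u => Finset.univ.filter (fun C => C.val ∈ dcls G v0 u)
    with hDnFdef
  have hDnFmem : ∀ u (C : W), C ∈ DnF u ↔ C.val ∈ dcls G v0 u := by
    intro u C
    rw [hDnFdef]
    simp
  have hDinj : Function.Injective DnF := by
    intro u v h
    apply dcls_inj hG v0
    ext C
    constructor
    · intro hC
      have : (⟨C, dcls_theta hC⟩ : W) ∈ DnF u := (hDnFmem u _).2 hC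
      rw [h] at this
      exact (hDnFmem v _).1 this
    · intro hC
      have : (⟨C, dcls_theta hC⟩ : W) ∈ DnF v := (hDnFmem v _).2 hC
      rw [← h] at this
      exact (hDnFmem u _).1 this
  have hDcl : ∀ u, DnF u ∈ cliqs Γ := by
    intro u
    intro C hC C' hC' hne
    rw [Finset.mem_coe] at hC hC'
    rw [hDnFmem] at hC hC'
    obtain ⟨x, hux, hxd, hCx⟩ := hC
    obtain ⟨y, huy, hyd, hC'y⟩ := hC'
    have hxy : x ≠ y := by
      rintro rfl
      exact hne (Subtype.ext (hCx.trans hC'y.symm))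
    rw [hΓadj, hCx, hC'y]
    exact down_crosses hG hux huy hxd hyd hxy
  have hcount : (n : ℕ) ≤ (cliqs Γ).ncard := by
    have h1 : (Set.univ : Set V).ncard = n := by
      rw [Set.ncard_univ, Nat.card_eq_fintype_card, hn]
    have h2 : ((fun u => DnF u) '' Set.univ).ncard = n := by
      rw [Set.ncard_image_of_injOn (Set.injOn_of_injective hDinj), h1]
    have h3 : ((fun u => DnF u) '' Set.univ) ⊆ cliqs Γ := by
      rintro t ⟨u, _, rfl⟩
      exact hDcl u
    rw [← h2]
    exact Set.ncard_le_ncard h3 (Set.toFinite _)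
  have hcardW : Fintype.card W = q := by
    rw [← Nat.card_eq_fintype_card]
    rw [← hq]
    exact Nat.card_coe_set_eq _
  have hzy := zykov_bound d hd Γ hfreeΓ
  rw [hcardW] at hzy
  calc (n : ℝ) ≤ ((cliqs Γ).ncard : ℝ) := by exact_mod_cast hcount
    _ ≤ (((d : ℝ) + q) / d) ^ d := hzy

end ThetaProof

theorem theta_classes_lower_bound {V : Type*} [Fintype V] (G : SimpleGraph V)
    (hG : IsMedianGraph G) (n q d : ℕ)
    (hn : Fintype.card V = n) (hq : (thetaClasses G).ncard = q)
    (hcube : Nonempty (cubeGraph d ↪g G))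
    (hmax : ∀ k : ℕ, Nonempty (cubeGraph k ↪g G) → k ≤ d) :
    (q : ℝ) ≥ d * ((n : ℝ) ^ ((1 : ℝ) / (d : ℝ)) - 1) := by
  rcases Nat.eq_zero_or_pos d with rfl | hd
  · simp
  · have hmain := ThetaProof.main_bound G hG n q d hd hn hq hmax
    have hd0 : (0 : ℝ) < d := by exact_mod_cast hd
    have hn0 : (0 : ℝ) ≤ n := Nat.cast_nonneg n
    have hbase : (0 : ℝ) ≤ ((d : ℝ) + q) / d := by positivity
    have h1 : (n : ℝ) ^ ((1 : ℝ) / d) ≤ ((d : ℝ) + q) / d := by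
      have h2 : ((n : ℝ)) ^ ((1 : ℝ) / d) ≤ ((((d : ℝ) + q) / d) ^ d) ^ ((1 : ℝ) / d) :=
        Real.rpow_le_rpow hn0 hmain (by positivity)
      have h3 : ((((d : ℝ) + q) / d) ^ d) ^ ((1 : ℝ) / d) = ((d : ℝ) + q) / d := by
        rw [← Real.rpow_natCast (((d : ℝ) + q) / d) d, ← Real.rpow_mul hbase]
        rw [mul_one_div, div_self (ne_of_gt hd0), Real.rpow_one]
      rw [h3] at h2
      exact h2
    rw [ge_iff_le]
    have h4 : (d : ℝ) * ((n : ℝ) ^ ((1 : ℝ) / d) - 1) ≤ (d : ℝ) * (((d : ℝ) + q) / d - 1) := by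
      apply mul_le_mul_of_nonneg_left _ (le_of_lt hd0)
      linarith
    have h5 : (d : ℝ) * (((d : ℝ) + q) / d - 1) = q := by
      field_simp
      ring
    linarith
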